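/- arXiv:1812.09183 — 7 statements merged into one kernel-verified Lean document; each statement's English description precedes it below -/
import Mathlib

section
/- Let A and B be finite-dimensional complex Hilbert spaces and let U be a unitary on A ⊗ B. If for every operator O_A on A and every operator O_B on B one has [U† (O_A ⊗ 1_B) U, 1_A ⊗ O_B] = 0 and [O_A ⊗ 1_B, U† (1_A ⊗ O_B) U] = 0, then there exist unitaries U_A on A and U_B on B such that U = U_A ⊗ U_B. -/
open Matrix Kronecker

lemma comm_right' (dA dB : ℕ) (b0 : Fin dB)
    (M : Matrix (Fin dA × Fin dB) (Fin dA × Fin dB) ℂ)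
    (h : ∀ OB : Matrix (Fin dB) (Fin dB) ℂ,
      M * ((1 : Matrix (Fin dA) (Fin dA) ℂ) ⊗ₖ OB) = ((1 : Matrix (Fin dA) (Fin dA) ℂ) ⊗ₖ OB) * M) :
    M = (Matrix.of fun a a' => M (a, b0) (a', b0)) ⊗ₖ (1 : Matrix (Fin dB) (Fin dB) ℂ) := by
  have key : ∀ (m n : Fin dB) (p p' : Fin dA × Fin dB),
      (if n = p'.2 then M p (p'.1, m) else 0) = (if m = p.2 then M (p.1, n) p' else 0) := by
    intro m n p p'
    have := congrFun (congrFun (h (single m n 1)) p) p'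
    simpa [Matrix.mul_apply, Matrix.kroneckerMap_apply, Matrix.single, Matrix.one_apply,
      Fintype.sum_prod_type, Finset.sum_ite_eq, Finset.sum_ite_eq', ite_and,
      Finset.mul_sum, mul_comm] using this
  ext ⟨a, b⟩ ⟨a', b'⟩
  simp only [Matrix.kroneckerMap_apply, Matrix.of_apply, Matrix.one_apply]
  by_cases hb : b = b'
  · subst hb
    have := key b b0 (a, b) (a', b0)
    simpa using this
  · rw [if_neg hb, mul_zero]
    have := key b' b' (a, b) (a', b')
    rw [if_pos rfl, if_neg (fun hh : b' = (a, b).2 => hb hh.symm)] at this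
    exact this

lemma comm_left' (dA dB : ℕ) (a0 : Fin dA)
    (M : Matrix (Fin dA × Fin dB) (Fin dA × Fin dB) ℂ)
    (h : ∀ OA : Matrix (Fin dA) (Fin dA) ℂ,
      M * (OA ⊗ₖ (1 : Matrix (Fin dB) (Fin dB) ℂ)) = (OA ⊗ₖ (1 : Matrix (Fin dB) (Fin dB) ℂ)) * M) :
    M = (1 : Matrix (Fin dA) (Fin dA) ℂ) ⊗ₖ (Matrix.of fun b b' => M (a0, b) (a0, b')) := by
  have key : ∀ (m n : Fin dA) (p p' : Fin dA × Fin dB),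
      (if n = p'.1 then M p (m, p'.2) else 0) = (if m = p.1 then M (n, p.2) p' else 0) := by
    intro m n p p'
    have := congrFun (congrFun (h (single m n 1)) p) p'
    simpa [Matrix.mul_apply, Matrix.kroneckerMap_apply, Matrix.single, Matrix.one_apply,
      Fintype.sum_prod_type, Finset.sum_ite_eq, Finset.sum_ite_eq', ite_and,
      Finset.mul_sum, mul_comm] using this
  ext ⟨a, b⟩ ⟨a', b'⟩
  simp only [Matrix.kroneckerMap_apply, Matrix.of_apply, Matrix.one_apply]
  by_cases ha : a = a'
  · subst ha
    have := key a a0 (a, b) (a0, b')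
    simpa using this
  · rw [if_neg ha, zero_mul]
    have := key a' a' (a, b) (a', b')
    rw [if_pos rfl, if_neg (fun hh : a' = (a, b).1 => ha hh.symm)] at this
    exact this

lemma conjT_kron {m n : Type*} [Fintype m] [Fintype n] (X : Matrix m m ℂ) (Y : Matrix n n ℂ) :
    (X ⊗ₖ Y)ᴴ = Xᴴ ⊗ₖ Yᴴ := by
  ext i j
  simp [Matrix.conjTranspose_apply, Matrix.kroneckerMap_apply, _root_.map_mul]

lemma sum_kron {ι m n : Type*} [Fintype n] (s : Finset ι) (f : ι → Matrix m m ℂ)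
    (B : Matrix n n ℂ) : (∑ i ∈ s, f i) ⊗ₖ B = ∑ i ∈ s, f i ⊗ₖ B := by
  classical
  induction s using Finset.induction_on with
  | empty => simp [Matrix.zero_kronecker]
  | insert _ _ h ih => simp [Finset.sum_insert h, Matrix.add_kronecker, ih]

theorem stmt0 (dA dB : ℕ) (hA : 1 ≤ dA) (hB : 1 ≤ dB)
    (U : Matrix (Fin dA × Fin dB) (Fin dA × Fin dB) ℂ)
    (hU : U ∈ Matrix.unitaryGroup (Fin dA × Fin dB) ℂ)
    (hcomm : ∀ (OA : Matrix (Fin dA) (Fin dA) ℂ) (OB : Matrix (Fin dB) (Fin dB) ℂ),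
      Commute (Uᴴ * (OA ⊗ₖ (1 : Matrix (Fin dB) (Fin dB) ℂ)) * U)
        ((1 : Matrix (Fin dA) (Fin dA) ℂ) ⊗ₖ OB) ∧
      Commute (OA ⊗ₖ (1 : Matrix (Fin dB) (Fin dB) ℂ))
        (Uᴴ * ((1 : Matrix (Fin dA) (Fin dA) ℂ) ⊗ₖ OB) * U)) :
    ∃ (UA : Matrix (Fin dA) (Fin dA) ℂ) (UB : Matrix (Fin dB) (Fin dB) ℂ),
      UA ∈ Matrix.unitaryGroup (Fin dA) ℂ ∧ UB ∈ Matrix.unitaryGroup (Fin dB) ℂ ∧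
      U = UA ⊗ₖ UB := by
  classical
  set a0 : Fin dA := ⟨0, hA⟩ with ha0
  set b0 : Fin dB := ⟨0, hB⟩ with hb0
  have hU1 : Uᴴ * U = 1 := by
    have := Matrix.mem_unitaryGroup_iff'.mp hU
    rwa [Matrix.star_eq_conjTranspose] at this
  have hU2 : U * Uᴴ = 1 := by
    have := Matrix.mem_unitaryGroup_iff.mp hU
    rwa [Matrix.star_eq_conjTranspose] at this
  have Ucancel : ∀ X Y : Matrix (Fin dA × Fin dB) (Fin dA × Fin dB) ℂ, U * X = U * Y → X = Y := by
    intro X Y h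
    calc X = Uᴴ * (U * X) := by rw [← Matrix.mul_assoc, hU1, Matrix.one_mul]
    _ = Uᴴ * (U * Y) := by rw [h]
    _ = Y := by rw [← Matrix.mul_assoc, hU1, Matrix.one_mul]
  have hFex : ∀ i j : Fin dA, ∃ N : Matrix (Fin dA) (Fin dA) ℂ,
      Uᴴ * (single i j 1 ⊗ₖ (1 : Matrix (Fin dB) (Fin dB) ℂ)) * U
        = N ⊗ₖ (1 : Matrix (Fin dB) (Fin dB) ℂ) :=
    fun i j => ⟨_, comm_right' dA dB b0 _ (fun OB => (hcomm (single i j 1) OB).1)⟩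
  choose F hF using hFex
  -- injectivity of X ↦ X ⊗ 1
  have kinj : ∀ X Y : Matrix (Fin dA) (Fin dA) ℂ,
      X ⊗ₖ (1 : Matrix (Fin dB) (Fin dB) ℂ) = Y ⊗ₖ (1 : Matrix (Fin dB) (Fin dB) ℂ) → X = Y := by
    intro X Y h
    ext i j
    have := congrFun (congrFun h (i, b0)) (j, b0)
    simpa [Matrix.kroneckerMap_apply] using this
  have hFrel : ∀ i j, U * (F i j ⊗ₖ (1 : Matrix (Fin dB) (Fin dB) ℂ))
      = (single i j 1 ⊗ₖ (1 : Matrix (Fin dB) (Fin dB) ℂ)) * U := by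
    intro i j
    rw [← hF i j]
    rw [show Uᴴ * (single i j 1 ⊗ₖ (1 : Matrix (Fin dB) (Fin dB) ℂ)) * U
      = Uᴴ * ((single i j 1 ⊗ₖ (1 : Matrix (Fin dB) (Fin dB) ℂ)) * U) from
        Matrix.mul_assoc _ _ _]
    rw [← Matrix.mul_assoc, hU2, Matrix.one_mul]
  have hFmul : ∀ i j k l, F i j * F k l = if j = k then F i l else 0 := by
    intro i j k l
    apply kinj
    apply Ucancel
    have e1 : (F i j * F k l) ⊗ₖ (1 : Matrix (Fin dB) (Fin dB) ℂ)
        = (F i j ⊗ₖ (1 : Matrix (Fin dB) (Fin dB) ℂ)) * (F k l ⊗ₖ (1 : Matrix (Fin dB) (Fin dB) ℂ)) := by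
      rw [← Matrix.mul_kronecker_mul, Matrix.one_mul]
    rw [e1, ← Matrix.mul_assoc, hFrel i j, Matrix.mul_assoc, hFrel k l, ← Matrix.mul_assoc,
      ← Matrix.mul_kronecker_mul]
    by_cases hjk : j = k
    · subst hjk
      rw [if_pos rfl, Matrix.single_mul_single_same, one_mul, Matrix.one_mul, hFrel]
    · have h0 : single i j (1:ℂ) * single k l (1:ℂ) = 0 := by
        simp [Matrix.single_mul_single_of_ne, hjk]
      rw [if_neg hjk, h0]
      simp [Matrix.zero_kronecker]
  -- F a0 a0 is nonzero
  obtain ⟨p, q, hpq⟩ : ∃ p q, F a0 a0 p q ≠ 0 := by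
    by_contra hcon
    push_neg at hcon
    have hF0 : F a0 a0 = 0 := by ext i j; exact hcon i j
    have h0 : (single a0 a0 (1:ℂ) ⊗ₖ (1 : Matrix (Fin dB) (Fin dB) ℂ)) * U = 0 := by
      rw [← hFrel, hF0, Matrix.zero_kronecker, Matrix.mul_zero]
    have h00 : (single a0 a0 (1:ℂ) ⊗ₖ (1 : Matrix (Fin dB) (Fin dB) ℂ)) = 0 := by
      calc single a0 a0 (1:ℂ) ⊗ₖ (1 : Matrix (Fin dB) (Fin dB) ℂ)
          = (single a0 a0 (1:ℂ) ⊗ₖ (1 : Matrix (Fin dB) (Fin dB) ℂ)) * U * Uᴴ := by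
            rw [Matrix.mul_assoc, hU2, Matrix.mul_one]
        _ = 0 := by rw [h0, Matrix.zero_mul]
    have := congrFun (congrFun h00 (a0, b0)) (a0, b0)
    simp [Matrix.kroneckerMap_apply, Matrix.single] at this
  -- the intertwiner
  set a : Matrix (Fin dA) (Fin dA) ℂ := Matrix.of fun i j => F j a0 i q with hadef
  have haapp : ∀ i j, a i j = F j a0 i q := fun i j => rfl
  have hrel : ∀ k l, F k l * a = a * single k l 1 := by
    intro k l
    ext i j
    have hL : (F k l * a) i j = (F k l * F j a0) i q := by
      simp only [Matrix.mul_apply, haapp]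
    have hR : (a * single k l (1:ℂ) : Matrix (Fin dA) (Fin dA) ℂ) i j = if l = j then F k a0 i q else 0 := by
      simp [Matrix.mul_apply, Matrix.single, haapp, Finset.sum_ite_eq, ite_and,
        mul_comm]
    rw [hL, hR, hFmul]
    by_cases hlj : l = j
    · subst hlj; simp
    · simp [hlj]
  -- a is invertible
  have hdet : IsUnit a.det := by
    rw [isUnit_iff_ne_zero]
    intro hd
    obtain ⟨v, hv, hav⟩ := (Matrix.exists_mulVec_eq_zero_iff).mpr hd
    apply hv
    funext i
    have h1 : a *ᵥ (single a0 i (1:ℂ) *ᵥ v) = 0 := by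
      rw [Matrix.mulVec_mulVec, ← hrel a0 i, ← Matrix.mulVec_mulVec, hav, Matrix.mulVec_zero]
    have h2 := congrFun h1 p
    rw [Matrix.single_mulVec] at h2
    simp only [Matrix.mulVec, dotProduct, Function.update, Pi.zero_apply] at h2
    have h3 : a p a0 * v i = 0 := by
      simpa [Finset.sum_ite_eq, eq_comm] using h2
    rw [haapp] at h3
    have := mul_eq_zero.mp h3
    tauto
  -- the matrix W = U (a ⊗ 1) commutes with everything of the form OA ⊗ 1
  set W : Matrix (Fin dA × Fin dB) (Fin dA × Fin dB) ℂ
    := U * (a ⊗ₖ (1 : Matrix (Fin dB) (Fin dB) ℂ)) with hWdef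
  have hWstd : ∀ k l : Fin dA, (single k l 1 ⊗ₖ (1 : Matrix (Fin dB) (Fin dB) ℂ)) * W
      = W * (single k l 1 ⊗ₖ (1 : Matrix (Fin dB) (Fin dB) ℂ)) := by
    intro k l
    calc (single k l 1 ⊗ₖ (1 : Matrix (Fin dB) (Fin dB) ℂ)) * W
        = ((single k l 1 ⊗ₖ (1 : Matrix (Fin dB) (Fin dB) ℂ)) * U)
            * (a ⊗ₖ (1 : Matrix (Fin dB) (Fin dB) ℂ)) := by rw [hWdef, Matrix.mul_assoc]
      _ = U * ((F k l ⊗ₖ (1 : Matrix (Fin dB) (Fin dB) ℂ))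
            * (a ⊗ₖ (1 : Matrix (Fin dB) (Fin dB) ℂ))) := by rw [← hFrel, Matrix.mul_assoc]
      _ = U * ((F k l * a) ⊗ₖ ((1 : Matrix (Fin dB) (Fin dB) ℂ) * 1)) := by
            rw [Matrix.mul_kronecker_mul]
      _ = U * ((a * single k l 1) ⊗ₖ ((1 : Matrix (Fin dB) (Fin dB) ℂ) * 1)) := by
            rw [hrel]
      _ = U * ((a ⊗ₖ (1 : Matrix (Fin dB) (Fin dB) ℂ))
            * (single k l 1 ⊗ₖ (1 : Matrix (Fin dB) (Fin dB) ℂ))) := by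
            rw [Matrix.mul_kronecker_mul]
      _ = W * (single k l 1 ⊗ₖ (1 : Matrix (Fin dB) (Fin dB) ℂ)) := by
            rw [hWdef, Matrix.mul_assoc]
  have hW : ∀ OA : Matrix (Fin dA) (Fin dA) ℂ,
      W * (OA ⊗ₖ (1 : Matrix (Fin dB) (Fin dB) ℂ))
        = (OA ⊗ₖ (1 : Matrix (Fin dB) (Fin dB) ℂ)) * W := by
    intro OA
    have hOA : OA ⊗ₖ (1 : Matrix (Fin dB) (Fin dB) ℂ)
        = ∑ i : Fin dA, ∑ j : Fin dA,
            OA i j • (single i j 1 ⊗ₖ (1 : Matrix (Fin dB) (Fin dB) ℂ)) := by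
      conv_lhs => rw [Matrix.matrix_eq_sum_single OA]
      rw [sum_kron]
      refine Finset.sum_congr rfl fun i _ => ?_
      rw [sum_kron]
      refine Finset.sum_congr rfl fun j _ => ?_
      rw [← Matrix.smul_kronecker, Matrix.smul_single, smul_eq_mul, mul_one]
    rw [hOA, Finset.mul_sum, Finset.sum_mul]
    refine Finset.sum_congr rfl fun i _ => ?_
    rw [Finset.mul_sum, Finset.sum_mul]
    refine Finset.sum_congr rfl fun j _ => ?_
    rw [Matrix.mul_smul, Matrix.smul_mul, hWstd i j]
  have hWb := comm_left' dA dB a0 W hW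
  set bmat : Matrix (Fin dB) (Fin dB) ℂ := Matrix.of fun x y => W (a0, x) (a0, y) with hbdef
  -- U = a⁻¹ ⊗ bmat
  have hainv : a * a⁻¹ = 1 := Matrix.mul_nonsing_inv a hdet
  have hUeq : U = a⁻¹ ⊗ₖ bmat := by
    calc U = U * ((a * a⁻¹) ⊗ₖ ((1 : Matrix (Fin dB) (Fin dB) ℂ) * 1)) := by
          rw [hainv, Matrix.one_mul, Matrix.one_kronecker_one, Matrix.mul_one]
      _ = U * ((a ⊗ₖ (1 : Matrix (Fin dB) (Fin dB) ℂ))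
            * (a⁻¹ ⊗ₖ (1 : Matrix (Fin dB) (Fin dB) ℂ))) := by rw [Matrix.mul_kronecker_mul]
      _ = W * (a⁻¹ ⊗ₖ (1 : Matrix (Fin dB) (Fin dB) ℂ)) := by rw [hWdef, Matrix.mul_assoc]
      _ = ((1 : Matrix (Fin dA) (Fin dA) ℂ) ⊗ₖ bmat)
            * (a⁻¹ ⊗ₖ (1 : Matrix (Fin dB) (Fin dB) ℂ)) := by rw [← hWb]
      _ = ((1 : Matrix (Fin dA) (Fin dA) ℂ) * a⁻¹) ⊗ₖ (bmat * 1) := by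
            rw [Matrix.mul_kronecker_mul]
      _ = a⁻¹ ⊗ₖ bmat := by rw [Matrix.one_mul, Matrix.mul_one]
  -- splitting the unitarity
  set P : Matrix (Fin dA) (Fin dA) ℂ := (a⁻¹)ᴴ * a⁻¹ with hPdef
  set Q : Matrix (Fin dB) (Fin dB) ℂ := bmatᴴ * bmat with hQdef
  have hPQ : P ⊗ₖ Q = 1 := by
    rw [hPdef, hQdef, Matrix.mul_kronecker_mul, ← conjT_kron, ← hUeq, hU1]
  have hent : ∀ i i' j j', P i i' * Q j j' = if i = i' ∧ j = j' then 1 else 0 := by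
    intro i i' j j'
    have := congrFun (congrFun hPQ (i, j)) (i', j')
    simpa [Matrix.kroneckerMap_apply, Matrix.one_apply, Prod.ext_iff] using this
  have hPdiag : ∀ i, P i i * Q b0 b0 = 1 := fun i => by simpa using hent i i b0 b0
  have hPoff : ∀ i i', i ≠ i' → P i i' * Q b0 b0 = 0 := fun i i' h => by
    simpa [h] using hent i i' b0 b0
  have hQdiag : ∀ j, P a0 a0 * Q j j = 1 := fun j => by simpa using hent a0 a0 j j
  have hQoff : ∀ j j', j ≠ j' → P a0 a0 * Q j j' = 0 := fun j j' h => by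
    simpa [h] using hent a0 a0 j j'
  have hl0 : Q b0 b0 ≠ 0 := by
    intro h
    have := hPdiag a0
    rw [h, mul_zero] at this
    exact zero_ne_one this
  have hPmat : P = (Q b0 b0)⁻¹ • (1 : Matrix (Fin dA) (Fin dA) ℂ) := by
    ext i i'
    by_cases hii : i = i'
    · subst hii
      simp only [Matrix.smul_apply, Matrix.one_apply_eq, smul_eq_mul, mul_one]
      field_simp
      exact hPdiag i
    · simp only [Matrix.smul_apply, Matrix.one_apply_ne hii, smul_eq_mul, mul_zero]
      rcases mul_eq_zero.mp (hPoff i i' hii) with h1 | h1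
      · exact h1
      · exact absurd h1 hl0
  have hPa : P a0 a0 = (Q b0 b0)⁻¹ := by
    rw [hPmat]; simp
  have hQmat : Q = (Q b0 b0) • (1 : Matrix (Fin dB) (Fin dB) ℂ) := by
    ext j j'
    by_cases hjj : j = j'
    · subst hjj
      simp only [Matrix.smul_apply, Matrix.one_apply_eq, smul_eq_mul, mul_one]
      have h := hQdiag j
      rw [hPa] at h
      exact ((inv_mul_eq_one₀ hl0).mp h).symm
    · simp only [Matrix.smul_apply, Matrix.one_apply_ne hjj, smul_eq_mul, mul_zero]
      have h := hQoff j j' hjj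
      rw [hPa] at h
      rcases mul_eq_zero.mp h with h1 | h1
      · exact absurd h1 (inv_ne_zero hl0)
      · exact h1
  -- Q b0 b0 is a positive real
  set r : ℝ := ∑ k, Complex.normSq (bmat k b0) with hrdef
  have hlr : Q b0 b0 = (r : ℂ) := by
    rw [hQdef]
    simp only [Matrix.mul_apply, Matrix.conjTranspose_apply]
    rw [hrdef]
    push_cast
    refine Finset.sum_congr rfl fun k _ => ?_
    exact Complex.normSq_eq_conj_mul_self.symm
  have hr0 : 0 < r := by
    rcases lt_or_eq_of_le (Finset.sum_nonneg (fun k _ => Complex.normSq_nonneg (bmat k b0))) with h | h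
    · exact h
    · exfalso; apply hl0; rw [hlr]
      exact Complex.ofReal_eq_zero.mpr (hrdef.trans h.symm)
  set mu : ℝ := Real.sqrt r with hmudef
  have hmu0 : 0 < mu := Real.sqrt_pos.mpr hr0
  have hmune : (mu : ℂ) ≠ 0 := by
    simpa using Complex.ofReal_ne_zero.mpr (ne_of_gt hmu0)
  have hmusq : (mu : ℂ) * (mu : ℂ) = Q b0 b0 := by
    rw [hlr, ← Complex.ofReal_mul, hmudef, Real.mul_self_sqrt (le_of_lt hr0)]
  refine ⟨(mu : ℂ) • a⁻¹, ((mu : ℂ))⁻¹ • bmat, ?_, ?_, ?_⟩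
  · rw [Matrix.mem_unitaryGroup_iff', Matrix.star_eq_conjTranspose, Matrix.conjTranspose_smul,
      Matrix.smul_mul, Matrix.mul_smul, Complex.star_def, Complex.conj_ofReal, ← hPdef,
      hPmat, smul_smul, smul_smul, hmusq, mul_inv_cancel₀ hl0, one_smul]
  · rw [Matrix.mem_unitaryGroup_iff', Matrix.star_eq_conjTranspose, Matrix.conjTranspose_smul,
      Matrix.smul_mul, Matrix.mul_smul, star_inv₀, Complex.star_def, Complex.conj_ofReal,
      ← hQdef, hQmat, smul_smul, smul_smul, ← mul_inv, hmusq,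
      inv_mul_cancel₀ hl0, one_smul]
  · rw [Matrix.smul_kronecker, Matrix.kronecker_smul, smul_smul, mul_inv_cancel₀ hmune,
      one_smul, hUeq]
end

section
/- Let A and B be finite-dimensional complex Hilbert spaces and U a unitary on A ⊗ B such that for every operator O_A on A, the operator U† (O_A ⊗ 1_B) U commutes with 1_A ⊗ O_B for all operators O_B on B. Then there exists an invertible matrix V_A on A with U† (O_A ⊗ 1_B) U = (V_A⁻¹ O_A V_A) ⊗ 1_B for all O_A. -/
open Matrix Kronecker


lemma commutant_lem (dA dB : ℕ) (hB : 0 < dB)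
    (X : Matrix (Fin dA × Fin dB) (Fin dA × Fin dB) ℂ)
    (h : ∀ OB : Matrix (Fin dB) (Fin dB) ℂ,
      X * ((1 : Matrix (Fin dA) (Fin dA) ℂ) ⊗ₖ OB)
        = ((1 : Matrix (Fin dA) (Fin dA) ℂ) ⊗ₖ OB) * X) :
    X = (Matrix.of fun a a' => X (a, ⟨0,hB⟩) (a', ⟨0,hB⟩)) ⊗ₖ
        (1 : Matrix (Fin dB) (Fin dB) ℂ) := by
  have key : ∀ (p q : Fin dB) (a : Fin dA) (b : Fin dB) (a' : Fin dA) (b' : Fin dB),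
      (if q = b' then X (a, b) (a', p) else 0)
        = (if p = b then X (a, q) (a', b') else 0) := by
    intro p q a b a' b'
    have h1 := congrFun (congrFun (h (single p q 1)) (a,b)) (a',b')
    simpa [Matrix.mul_apply, Fintype.sum_prod_type, Matrix.one_apply,
      Matrix.single, ite_and, Finset.sum_ite_eq, Finset.sum_ite_eq',
      mul_ite, ite_mul, Matrix.kroneckerMap_apply] using h1
  ext ⟨a,b⟩ ⟨a',b'⟩
  simp only [Matrix.kroneckerMap_apply, Matrix.of_apply, Matrix.one_apply]
  by_cases hbb : b = b'
  · subst hbb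
    have := key b ⟨0,hB⟩ a b a' ⟨0,hB⟩
    simpa using this
  · have := key b' b' a b a' b'
    simp [Ne.symm hbb] at this
    simp [hbb, this]

lemma inner_aut (n : ℕ) (hn : 0 < n)
    (f : Matrix (Fin n) (Fin n) ℂ →ₗ[ℂ] Matrix (Fin n) (Fin n) ℂ)
    (hmul : ∀ X Y, f (X * Y) = f X * f Y)
    (hinj : Function.Injective f) :
    ∃ V : Matrix (Fin n) (Fin n) ℂ, IsUnit V ∧
      ∀ X : Matrix (Fin n) (Fin n) ℂ, f X * V = V * X := by
  set z : Fin n := ⟨0, hn⟩ with hz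
  set E : Fin n → Fin n → Matrix (Fin n) (Fin n) ℂ :=
    fun i j => single i j (1:ℂ) with hE
  have hE00 : f (E z z) ≠ 0 := by
    intro h
    have h0 : E z z = 0 := hinj (by simpa using h)
    have := congrFun (congrFun h0 z) z
    simp [hE, Matrix.single] at this
  obtain ⟨r, c, hrc⟩ : ∃ r c, f (E z z) r c ≠ 0 := by
    by_contra hcon
    push_neg at hcon
    exact hE00 (by ext r c; simpa using hcon r c)
  set w : Fin n → ℂ := Pi.single c 1 with hw
  have hw0 : (f (E z z)).mulVec w ≠ 0 := by
    intro h
    have := congrFun h r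
    simp [hw, Matrix.mulVec_single] at this
    exact hrc this
  set v : Fin n → Fin n → ℂ := fun i => (f (E i z)).mulVec w with hv
  set V : Matrix (Fin n) (Fin n) ℂ := Matrix.of fun r i => v i r with hV
  have hmulE : ∀ i j k, f (E i j) * f (E k z) =
      if j = k then f (E i z) else 0 := by
    intro i j k
    rw [← hmul]
    by_cases h : j = k
    · subst h
      simp [hE]
    · rw [if_neg h, hE]
      simp only []
      rw [Matrix.single_mul_single_of_ne (h := h), map_zero]
  have hkey : ∀ i j, f (E i j) * V = V * E i j := by
    intro i j
    ext r k
    have lhs : (f (E i j) * V) r k = ((f (E i j) * f (E k z)).mulVec w) r := by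
      simp only [Matrix.mul_apply, Matrix.mulVec, dotProduct, hV, hv,
        Matrix.of_apply, Finset.mul_sum, Finset.sum_mul]
      rw [Finset.sum_comm]
      refine Finset.sum_congr rfl fun s _ => Finset.sum_congr rfl fun t _ => ?_
      ring
    rw [lhs, hmulE]
    by_cases h : j = k
    · subst h
      simp [hV, hv, Matrix.mul_apply, hE, Matrix.single, ite_and,
        mul_ite, ite_mul]
    · simp [hV, hv, Matrix.mul_apply, hE, Matrix.single, ite_and,
        mul_ite, ite_mul, h, Ne.symm h]
  have hall : ∀ X, f X * V = V * X := by
    intro X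
    induction X using Matrix.induction_on' with
    | h_zero => simp
    | h_add P Q hP hQ => rw [map_add, add_mul, hP, hQ, mul_add]
    | h_std_basis i j a =>
      have hsb : single i j a = a • E i j := by
        rw [hE]; simp
      rw [hsb, _root_.map_smul, smul_mul_assoc, hkey, mul_smul_comm]
  have hVinj : Function.Injective V.mulVec := by
    have hker : ∀ x, V.mulVec x = 0 → x = 0 := by
      intro x hx
      funext j
      have h1 : V.mulVec ((E z j).mulVec x) = 0 := by
        rw [Matrix.mulVec_mulVec, ← hkey, ← Matrix.mulVec_mulVec, hx,
          Matrix.mulVec_zero]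
      have hEx : (E z j).mulVec x = Pi.single z (x j) := by
        funext s
        simp [hE, Matrix.mulVec, dotProduct, Matrix.single,
          ite_and, Pi.single_apply, boole_mul, eq_comm]
      rw [hEx] at h1
      obtain ⟨r0, hr0⟩ : ∃ r0, v z r0 ≠ 0 := by
        by_contra hcon
        push_neg at hcon
        exact hw0 (funext fun r0 => hcon r0)
      have h2 := congrFun h1 r0
      simp [Matrix.mulVec_single, hV] at h2
      rcases h2 with h2 | h2
      · exact absurd h2 hr0
      · exact h2
    intro x y hxy
    have h0 : V.mulVec (x - y) = 0 := by
      rw [Matrix.mulVec_sub, hxy, sub_self]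
    exact sub_eq_zero.mp (hker _ h0)
  exact ⟨V, (Matrix.mulVec_injective_iff_isUnit).mp hVinj, hall⟩

theorem stmt1 (dA dB : ℕ) (hA : 1 ≤ dA) (hB : 1 ≤ dB)
    (U : Matrix (Fin dA × Fin dB) (Fin dA × Fin dB) ℂ)
    (hU : U ∈ Matrix.unitaryGroup (Fin dA × Fin dB) ℂ)
    (hcomm : ∀ (OA : Matrix (Fin dA) (Fin dA) ℂ) (OB : Matrix (Fin dB) (Fin dB) ℂ),
      Commute (Uᴴ * (OA ⊗ₖ (1 : Matrix (Fin dB) (Fin dB) ℂ)) * U)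
        ((1 : Matrix (Fin dA) (Fin dA) ℂ) ⊗ₖ OB)) :
    ∃ VA : Matrix (Fin dA) (Fin dA) ℂ, IsUnit VA ∧
      ∀ OA : Matrix (Fin dA) (Fin dA) ℂ,
        Uᴴ * (OA ⊗ₖ (1 : Matrix (Fin dB) (Fin dB) ℂ)) * U
          = (VA⁻¹ * OA * VA) ⊗ₖ (1 : Matrix (Fin dB) (Fin dB) ℂ) := by
  have hB' : 0 < dB := hB
  set b0 : Fin dB := ⟨0, hB'⟩ with hb0
  obtain ⟨hU1, hU2⟩ := hU
  rw [Matrix.star_eq_conjTranspose] at hU1 hU2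
  -- conjugation cancellation
  have hcancel : ∀ A : Matrix (Fin dA × Fin dB) (Fin dA × Fin dB) ℂ,
      U * (Uᴴ * A * U) * Uᴴ = A := by
    intro A
    calc U * (Uᴴ * A * U) * Uᴴ = (U * Uᴴ) * A * (U * Uᴴ) := by
          simp only [Matrix.mul_assoc]
      _ = A := by rw [hU2, one_mul, mul_one]
  -- the map F
  set F : Matrix (Fin dA) (Fin dA) ℂ →ₗ[ℂ] Matrix (Fin dA) (Fin dA) ℂ :=
    { toFun := fun OA => Matrix.of fun a a' =>
        (Uᴴ * (OA ⊗ₖ (1 : Matrix (Fin dB) (Fin dB) ℂ)) * U) (a, b0) (a', b0)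
      map_add' := by
        intro O1 O2
        ext a a'
        simp [Matrix.add_kronecker, Matrix.add_mul, Matrix.mul_add]
      map_smul' := by
        intro c O
        ext a a'
        simp [Matrix.smul_kronecker, Matrix.smul_mul, Matrix.mul_smul] } with hF
  have hX : ∀ OA, Uᴴ * (OA ⊗ₖ (1 : Matrix (Fin dB) (Fin dB) ℂ)) * U
      = (F OA) ⊗ₖ (1 : Matrix (Fin dB) (Fin dB) ℂ) := by
    intro OA
    exact commutant_lem dA dB hB' _ (fun OB => (hcomm OA OB).eq)
  -- injectivity of tensoring with 1
  have hkinj : ∀ M N : Matrix (Fin dA) (Fin dA) ℂ,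
      M ⊗ₖ (1 : Matrix (Fin dB) (Fin dB) ℂ) = N ⊗ₖ (1 : Matrix (Fin dB) (Fin dB) ℂ)
        → M = N := by
    intro M N h
    ext a a'
    have := congrFun (congrFun h (a, b0)) (a', b0)
    simpa [Matrix.kroneckerMap_apply, Matrix.one_apply] using this
  have hFinj : Function.Injective F := by
    intro O1 O2 h
    have h1 : Uᴴ * (O1 ⊗ₖ (1 : Matrix (Fin dB) (Fin dB) ℂ)) * U
        = Uᴴ * (O2 ⊗ₖ (1 : Matrix (Fin dB) (Fin dB) ℂ)) * U := by
      rw [hX, hX, h]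
    have h2 := congrArg (fun A => U * A * Uᴴ) h1
    simp only [hcancel] at h2
    exact hkinj _ _ h2
  have hFmul : ∀ O1 O2, F (O1 * O2) = F O1 * F O2 := by
    intro O1 O2
    apply hkinj
    have hsplit : (F O1 * F O2) ⊗ₖ (1 : Matrix (Fin dB) (Fin dB) ℂ)
        = ((F O1) ⊗ₖ (1 : Matrix (Fin dB) (Fin dB) ℂ))
          * ((F O2) ⊗ₖ (1 : Matrix (Fin dB) (Fin dB) ℂ)) := by
      rw [← Matrix.mul_kronecker_mul, Matrix.one_mul]
    rw [hsplit, ← hX, ← hX, ← hX]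
    calc Uᴴ * ((O1 * O2) ⊗ₖ (1 : Matrix (Fin dB) (Fin dB) ℂ)) * U
        = Uᴴ * ((O1 ⊗ₖ (1 : Matrix (Fin dB) (Fin dB) ℂ))
            * (O2 ⊗ₖ (1 : Matrix (Fin dB) (Fin dB) ℂ))) * U := by
          rw [← Matrix.mul_kronecker_mul, one_mul]
      _ = (Uᴴ * (O1 ⊗ₖ (1 : Matrix (Fin dB) (Fin dB) ℂ)) * U)
            * (Uᴴ * (O2 ⊗ₖ (1 : Matrix (Fin dB) (Fin dB) ℂ)) * U) := by
          simp only [Matrix.mul_assoc, Matrix.mul_one]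
          rw [← Matrix.mul_assoc U Uᴴ, hU2, Matrix.one_mul]
  obtain ⟨V, hVu, hVint⟩ := inner_aut dA hA F hFmul hFinj
  have hVdet : IsUnit V.det := (Matrix.isUnit_iff_isUnit_det V).mp hVu
  refine ⟨V⁻¹, ?_, ?_⟩
  · exact Matrix.isUnit_nonsing_inv_iff.mpr hVu
  · intro OA
    have hFOA : F OA = V * OA * V⁻¹ := by
      calc F OA = F OA * V * V⁻¹ := by
            rw [Matrix.mul_assoc, Matrix.mul_nonsing_inv V hVdet, Matrix.mul_one]
        _ = V * OA * V⁻¹ := by rw [hVint OA]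
    rw [hX, Matrix.nonsing_inv_nonsing_inv V hVdet, ← hFOA]
end

section
/- Let G be a finite group and z: [0,1] → (G → U(n)) a continuous path such that each z(λ) is a projective unitary representation of G whose factor set is a 2-coboundary (trivial cohomology class). Then there exists a continuous family of functions ω_g: [0,1] → U(1) such that λ ↦ (g ↦ ω_g(λ) z_g(λ)) is a continuous path of linear (honest) representations of G. -/
open Matrix

namespace Stmt13Aux

/-- norm of an N-th root of unity is 1 -/
lemma norm_of_pow_eq_one {ζ : ℂ} {N : ℕ} (hN : N ≠ 0) (h : ζ ^ N = 1) : ‖ζ‖ = 1 := by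
  have h1 : ‖ζ‖ ^ N = 1 := by rw [← norm_pow, h, norm_one]
  rcases lt_trichotomy ‖ζ‖ 1 with hlt | heq | hgt
  · have := pow_lt_one₀ (norm_nonneg ζ) hlt hN
    linarith
  · exact heq
  · have := one_lt_pow₀ hgt hN
    linarith

/-- separation constant for N-th roots of unity -/
lemma exists_sep (N : ℕ) (hN : N ≠ 0) :
    ∃ δ > (0:ℝ), ∀ ζ : ℂ, ζ ^ N = 1 → ‖ζ - 1‖ < δ → ζ = 1 := by
  classical
  set Rf : Finset ℂ := (Polynomial.nthRoots N (1:ℂ)).toFinset.erase 1 with hRf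
  set S : Finset ℝ := Rf.image (fun ζ => ‖ζ - 1‖) with hS
  by_cases hne : S.Nonempty
  · refine ⟨S.min' hne, ?_, ?_⟩
    · rcases Finset.mem_image.mp (S.min'_mem hne) with ⟨ζ, hζ, hval⟩
      have hζ1 : ζ ≠ 1 := (Finset.mem_erase.mp hζ).1
      rw [← hval]
      have h0 : ζ - 1 ≠ 0 := sub_ne_zero.mpr hζ1
      exact norm_pos_iff.mpr h0
    · intro ζ hpow hlt
      by_contra h1
      have hζR : ζ ∈ Rf := by
        refine Finset.mem_erase.mpr ⟨h1, Multiset.mem_toFinset.mpr ?_⟩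
        exact (Polynomial.mem_nthRoots (Nat.pos_of_ne_zero hN)).mpr hpow
      have : ‖ζ - 1‖ ∈ S := Finset.mem_image.mpr ⟨ζ, hζR, rfl⟩
      exact absurd hlt (not_lt.mpr (S.min'_le _ this))
  · refine ⟨1, one_pos, ?_⟩
    intro ζ hpow _
    by_contra h1
    have hζR : ζ ∈ Rf := by
      refine Finset.mem_erase.mpr ⟨h1, Multiset.mem_toFinset.mpr ?_⟩
      exact (Polynomial.mem_nthRoots (Nat.pos_of_ne_zero hN)).mpr hpow
    exact hne ⟨_, Finset.mem_image.mpr ⟨ζ, hζR, rfl⟩⟩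

/-- compactness: units whose N-th power is near 1 are near N-th roots of unity -/
lemma root_approx (N : ℕ) (hN : N ≠ 0) {r : ℝ} (hr : 0 < r) :
    ∃ ε > (0:ℝ), ∀ u : ℂ, ‖u‖ = 1 → ‖u ^ N - 1‖ ≤ ε →
      ∃ ζ : ℂ, ζ ^ N = 1 ∧ ‖u - ζ‖ < r := by
  classical
  set Rf : Finset ℂ := (Polynomial.nthRoots N (1:ℂ)).toFinset with hRf
  have hmemRf : ∀ ζ : ℂ, ζ ∈ Rf ↔ ζ ^ N = 1 := fun ζ => by
    simp [hRf, Multiset.mem_toFinset, Polynomial.mem_nthRoots (Nat.pos_of_ne_zero hN)]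
  set V : Set ℂ := ⋃ ζ ∈ Rf, Metric.ball ζ r with hV
  have hVopen : IsOpen V := isOpen_biUnion (fun ζ _ => Metric.isOpen_ball)
  set K : Set ℂ := Metric.sphere 0 1 ∩ Vᶜ with hK
  have hKcomp : IsCompact K :=
    (isCompact_sphere 0 1).inter_right hVopen.isClosed_compl
  by_cases hKne : K.Nonempty
  · obtain ⟨u0, hu0K, hmin⟩ := hKcomp.exists_isMinOn hKne
      (f := fun u => ‖u ^ N - 1‖) (by fun_prop)
    have hm : 0 < ‖u0 ^ N - 1‖ := by
      rcases eq_or_ne (u0 ^ N) 1 with he | he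
      · exfalso
        have : u0 ∈ V := Set.mem_biUnion ((hmemRf u0).mpr he) (by simpa using hr)
        exact hu0K.2 this
      · simpa [sub_eq_zero] using norm_pos_iff.mpr (sub_ne_zero.mpr he)
    refine ⟨‖u0 ^ N - 1‖ / 2, by positivity, ?_⟩
    intro u hu hle
    have huK : u ∉ K := by
      intro huK
      have h2 := hmin huK
      simp only [Set.mem_setOf_eq] at h2
      linarith
    have huV : u ∈ V := by
      by_contra hv
      exact huK ⟨by simpa [Metric.mem_sphere] using hu, hv⟩
    rcases Set.mem_iUnion₂.mp huV with ⟨ζ, hζ, hball⟩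
    exact ⟨ζ, (hmemRf ζ).mp hζ, by simpa [dist_eq_norm] using hball⟩
  · refine ⟨1, one_pos, ?_⟩
    intro u hu _
    have huV : u ∈ V := by
      by_contra hv
      exact hKne ⟨u, by simpa [Metric.mem_sphere] using hu, hv⟩
    rcases Set.mem_iUnion₂.mp huV with ⟨ζ, hζ, hball⟩
    exact ⟨ζ, (hmemRf ζ).mp hζ, by simpa [dist_eq_norm] using hball⟩

lemma nz_of_norm_one {x : ℂ} (h : ‖x‖ = 1) : x ≠ 0 := by
  intro h0; rw [h0, norm_zero] at h; norm_num at h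

variable {G : Type*} [Group G] [Fintype G]

/-- scalar trivializer of the (inverse) cocycle c -/
def Triv (c : G → G → ℂ) (β : G → ℂ) : Prop :=
  (∀ g, ‖β g‖ = 1) ∧ ∀ g h, β g * β h * c g h = β (g * h)

lemma Triv.norm_c {c : G → G → ℂ} {β : G → ℂ} (h : Triv c β) (g h' : G) :
    ‖c g h'‖ = 1 := by
  have := congrArg norm (h.2 g h')
  simp only [norm_mul, h.1] at this
  linarith

/-- a multiplicative map with values of norm one has χ 1 = 1 -/
lemma char_one {χ : G → ℂ} (hu : ∀ g, ‖χ g‖ = 1)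
    (hm : ∀ g h, χ g * χ h = χ (g * h)) : χ 1 = 1 := by
  have h := hm 1 1
  rw [one_mul] at h
  have h1 : χ 1 ≠ 0 := nz_of_norm_one (hu 1)
  field_simp at h
  tauto

lemma char_pow {χ : G → ℂ} (hu : ∀ g, ‖χ g‖ = 1)
    (hm : ∀ g h, χ g * χ h = χ (g * h)) (g : G) (k : ℕ) : χ (g ^ k) = χ g ^ k := by
  induction k with
  | zero => simpa using char_one hu hm
  | succ k ih => rw [pow_succ, pow_succ, ← hm, ih]

lemma char_card {χ : G → ℂ} (hu : ∀ g, ‖χ g‖ = 1)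
    (hm : ∀ g h, χ g * χ h = χ (g * h)) (g : G) : χ g ^ Fintype.card G = 1 := by
  rw [← char_pow hu hm, pow_card_eq_one, char_one hu hm]

/-- the ratio of two trivializers is a character -/
lemma Triv.ratio_char {c : G → G → ℂ} {β β' : G → ℂ} (h : Triv c β) (h' : Triv c β') :
    (∀ g, ‖β' g * (β g)⁻¹‖ = 1) ∧
      ∀ g h', (β' g * (β g)⁻¹) * (β' h' * (β h')⁻¹) = β' (g * h') * (β (g * h'))⁻¹ := by
  constructor
  · intro g; rw [norm_mul, norm_inv, h.1, h'.1]; norm_num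
  · intro g k
    have e1 := h.2 g k
    have e2 := h'.2 g k
    have hbg := nz_of_norm_one (h.1 g)
    have hbk := nz_of_norm_one (h.1 k)
    have hc := nz_of_norm_one (h.norm_c g k)
    field_simp
    rw [← e1, ← e2]
    field_simp

/-- multiplying a trivializer by a character gives a trivializer -/
lemma Triv.mul_char {c : G → G → ℂ} {β χ : G → ℂ} (h : Triv c β)
    (hu : ∀ g, ‖χ g‖ = 1) (hm : ∀ g h, χ g * χ h = χ (g * h)) :
    Triv c (fun g => β g * χ g) := by
  refine ⟨fun g => by rw [norm_mul, h.1, hu, one_mul], fun g k => ?_⟩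
  have := h.2 g k
  simp only []
  rw [← hm g k, ← this]; ring

/-- uniqueness: trivializers at distance < δ (separation constant) are equal -/
lemma Triv.uniq {δ : ℝ}
    (hδ : ∀ ζ : ℂ, ζ ^ Fintype.card G = 1 → ‖ζ - 1‖ < δ → ζ = 1)
    {c : G → G → ℂ} {β β' : G → ℂ} (h : Triv c β) (h' : Triv c β')
    (hclose : ∀ g, ‖β' g - β g‖ < δ) : β = β' := by
  obtain ⟨hu, hm⟩ := h.ratio_char h'
  funext g
  have hpow : (β' g * (β g)⁻¹) ^ Fintype.card G = 1 := char_card hu hm g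
  have hnorm : ‖β' g * (β g)⁻¹ - 1‖ = ‖β' g - β g‖ := by
    have hbg := nz_of_norm_one (h.1 g)
    have : β' g * (β g)⁻¹ - 1 = (β' g - β g) * (β g)⁻¹ := by field_simp
    rw [this, norm_mul, norm_inv, h.1 g]; norm_num
  have := hδ _ hpow (by rw [hnorm]; exact hclose g)
  have hbg := nz_of_norm_one (h.1 g)
  field_simp at this
  exact this.symm

/-- approximate multiplicativity propagates to powers -/
lemma approx_pow {μ : G → ℂ} {d : G → G → ℂ} {ε : ℝ}
    (hμ : ∀ g, ‖μ g‖ = 1) (hd : ∀ g h, μ g * μ h = d g h * μ (g * h))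
    (hde : ∀ g h, ‖d g h - 1‖ ≤ ε) (g : G) (k : ℕ) :
    ‖μ (g ^ k) - μ g ^ k‖ ≤ (k + 1) * ε := by
  have hε : 0 ≤ ε := le_trans (norm_nonneg _) (hde 1 1)
  have hμ1 : ‖μ 1 - 1‖ ≤ ε := by
    have h := hd 1 1
    rw [one_mul] at h
    have h1 : μ 1 ≠ 0 := nz_of_norm_one (hμ 1)
    have : μ 1 = d 1 1 := by
      have := mul_right_cancel₀ h1 h
      linear_combination this
    rw [this]; exact hde 1 1
  induction k with
  | zero => simpa using hμ1
  | succ k ih =>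
      have step : ‖μ (g ^ k) * μ g - μ (g ^ (k + 1))‖ ≤ ε := by
        rw [hd (g ^ k) g, ← pow_succ]
        have : d (g ^ k) g * μ (g ^ (k+1)) - μ (g ^ (k+1))
            = (d (g ^ k) g - 1) * μ (g ^ (k+1)) := by ring
        rw [this, norm_mul, hμ, mul_one]
        exact hde _ _
      have tri : ‖μ (g ^ (k+1)) - μ g ^ (k+1)‖
          ≤ ‖μ (g ^ (k+1)) - μ (g ^ k) * μ g‖ + ‖μ (g ^ k) * μ g - μ g ^ (k+1)‖ := by
        simpa using norm_sub_le_norm_sub_add_norm_sub (μ (g ^ (k+1))) (μ (g ^ k) * μ g) (μ g ^ (k+1))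
      have last : ‖μ (g ^ k) * μ g - μ g ^ (k+1)‖ ≤ (k + 1) * ε := by
        rw [pow_succ]
        have : μ (g ^ k) * μ g - μ g ^ k * μ g = (μ (g ^ k) - μ g ^ k) * μ g := by ring
        rw [this, norm_mul, hμ, mul_one]
        exact ih
      rw [norm_sub_rev] at step
      push_cast
      calc ‖μ (g ^ (k+1)) - μ g ^ (k+1)‖ ≤ ε + (k + 1) * ε := le_trans tri (by linarith)
        _ = ((k:ℝ) + 1 + 1) * ε := by ring


/-- quantitative stability: trivializers of nearby cocycles can be corrected
to be near a given trivializer of the base cocycle -/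
lemma stability {δ : ℝ} (hδpos : 0 < δ)
    (hδ : ∀ ζ : ℂ, ζ ^ Fintype.card G = 1 → ‖ζ - 1‖ < δ → ζ = 1)
    {r : ℝ} (hr : 0 < r) :
    ∃ ε > (0:ℝ), ∀ c0 c1 : G → G → ℂ, ∀ α0 β : G → ℂ, Triv c0 α0 → Triv c1 β →
      (∀ g h, ‖c1 g h - c0 g h‖ ≤ ε) →
      ∃ β', Triv c1 β' ∧ ∀ g, ‖β' g - α0 g‖ < r := by
  classical
  set N := Fintype.card G with hN
  have hNpos : 0 < N := Fintype.card_pos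
  set r' : ℝ := min r (δ / 8) with hr'
  have hr'pos : 0 < r' := lt_min hr (by linarith)
  obtain ⟨ε3, hε3pos, hε3⟩ := root_approx N hNpos.ne' hr'pos
  refine ⟨min (ε3 / (N + 2)) (δ / 8), lt_min (by positivity) (by linarith), ?_⟩
  set ε : ℝ := min (ε3 / (N + 2)) (δ / 8) with hε
  have hεpos : 0 < ε := lt_min (by positivity) (by linarith)
  intro c0 c1 α0 β h0 h1 hclose
  set μ : G → ℂ := fun g => β g * (α0 g)⁻¹ with hμdef
  have hμu : ∀ g, ‖μ g‖ = 1 := by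
    intro g; rw [hμdef]; simp only []
    rw [norm_mul, norm_inv, h1.1, h0.1]; norm_num
  set d : G → G → ℂ := fun g h => c0 g h * (c1 g h)⁻¹ with hddef
  have hdmul : ∀ g h, μ g * μ h = d g h * μ (g * h) := by
    intro g k
    have e0 := h0.2 g k
    have e1 := h1.2 g k
    have hb := fun g => nz_of_norm_one (h1.1 g)
    have ha := fun g => nz_of_norm_one (h0.1 g)
    have hc0 := nz_of_norm_one (h0.norm_c g k)
    have hc1 := nz_of_norm_one (h1.norm_c g k)
    simp only [hμdef, hddef]
    rw [← e0, ← e1]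
    field_simp
  have hde : ∀ g h, ‖d g h - 1‖ ≤ ε := by
    intro g k
    have hc1n := h1.norm_c g k
    have hc1 := nz_of_norm_one hc1n
    have : d g k - 1 = (c0 g k - c1 g k) * (c1 g k)⁻¹ := by
      simp only [hddef]; field_simp
    rw [this, norm_mul, norm_inv, hc1n]
    rw [norm_sub_rev]
    simpa using hclose g k
  -- μ g ^ N is close to 1
  have hμN : ∀ g, ‖μ g ^ N - 1‖ ≤ ε3 := by
    intro g
    have h1' := approx_pow hμu hdmul hde g N
    have hg1 : g ^ N = 1 := pow_card_eq_one
    rw [hg1] at h1'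
    have hμ1 : ‖μ 1 - 1‖ ≤ ε := by
      have h := hdmul 1 1
      rw [one_mul] at h
      have h1'' : μ 1 ≠ 0 := nz_of_norm_one (hμu 1)
      have : μ 1 = d 1 1 := by
        have := mul_right_cancel₀ h1'' h
        linear_combination this
      rw [this]; exact hde 1 1
    have tri : ‖μ g ^ N - 1‖ ≤ ‖μ g ^ N - μ 1‖ + ‖μ 1 - 1‖ := by
      simpa using norm_sub_le_norm_sub_add_norm_sub (μ g ^ N) (μ 1) 1
    rw [norm_sub_rev] at h1'
    have hεle : ε ≤ ε3 / (N + 2) := min_le_left _ _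
    have : ((N:ℝ) + 1) * ε + ε ≤ ε3 := by
      have : ((N:ℝ) + 2) * ε ≤ ε3 := by
        rw [mul_comm]
        have hN2 : (0:ℝ) < (N:ℝ) + 2 := by positivity
        calc ε * ((N:ℝ) + 2) ≤ ε3 / (N + 2) * ((N:ℝ) + 2) := by
              exact mul_le_mul_of_nonneg_right hεle (le_of_lt hN2)
          _ = ε3 := by field_simp
      linarith
    linarith
  -- choose nearby roots of unity
  have hroots : ∀ g, ∃ ζ : ℂ, ζ ^ N = 1 ∧ ‖μ g - ζ‖ < r' :=
    fun g => hε3 (μ g) (hμu g) (hμN g)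
  choose χ hχpow hχclose using hroots
  have hχu : ∀ g, ‖χ g‖ = 1 := fun g => norm_of_pow_eq_one hNpos.ne' (hχpow g)
  -- χ is a character
  have hχmul : ∀ g h, χ g * χ h = χ (g * h) := by
    intro g k
    have hd1 : ‖χ g * χ k - χ (g * k)‖ < δ := by
      have t1 : ‖χ g * χ k - μ g * μ k‖ ≤ ‖χ g - μ g‖ + ‖χ k - μ k‖ := by
        have : χ g * χ k - μ g * μ k = (χ g - μ g) * χ k + μ g * (χ k - μ k) := by ring
        rw [this]
        calc ‖(χ g - μ g) * χ k + μ g * (χ k - μ k)‖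
            ≤ ‖(χ g - μ g) * χ k‖ + ‖μ g * (χ k - μ k)‖ := norm_add_le _ _
          _ = ‖χ g - μ g‖ + ‖χ k - μ k‖ := by rw [norm_mul, norm_mul, hχu, hμu, mul_one, one_mul]
      have t2 : ‖μ g * μ k - μ (g * k)‖ ≤ ε := by
        rw [hdmul g k]
        have : d g k * μ (g * k) - μ (g * k) = (d g k - 1) * μ (g * k) := by ring
        rw [this, norm_mul, hμu, mul_one]
        exact hde g k
      have t3 : ‖μ (g * k) - χ (g * k)‖ < r' := hχclose (g * k)
      have g1 : ‖χ g - μ g‖ < r' := by rw [norm_sub_rev]; exact hχclose g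
      have g2 : ‖χ k - μ k‖ < r' := by rw [norm_sub_rev]; exact hχclose k
      have tri : ‖χ g * χ k - χ (g * k)‖
          ≤ ‖χ g * χ k - μ g * μ k‖ + ‖μ g * μ k - μ (g * k)‖ + ‖μ (g * k) - χ (g * k)‖ := by
        calc ‖χ g * χ k - χ (g * k)‖
            ≤ ‖χ g * χ k - μ (g * k)‖ + ‖μ (g * k) - χ (g * k)‖ := by
              simpa using norm_sub_le_norm_sub_add_norm_sub (χ g * χ k) (μ (g * k)) (χ (g * k))
          _ ≤ ‖χ g * χ k - μ g * μ k‖ + ‖μ g * μ k - μ (g * k)‖ + ‖μ (g * k) - χ (g * k)‖ := by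
              have := norm_sub_le_norm_sub_add_norm_sub (χ g * χ k) (μ g * μ k) (μ (g * k))
              linarith
      have hr'le : r' ≤ δ / 8 := min_le_right _ _
      have hεle : ε ≤ δ / 8 := min_le_right _ _
      linarith
    -- ratio is an N-th root of unity close to 1
    have hgk := nz_of_norm_one (hχu (g * k))
    have hpow : (χ g * χ k * (χ (g * k))⁻¹) ^ N = 1 := by
      rw [mul_pow, mul_pow, inv_pow, hχpow, hχpow, hχpow]
      norm_num
    have hnorm : ‖χ g * χ k * (χ (g * k))⁻¹ - 1‖ = ‖χ g * χ k - χ (g * k)‖ := by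
      have : χ g * χ k * (χ (g * k))⁻¹ - 1 = (χ g * χ k - χ (g * k)) * (χ (g * k))⁻¹ := by
        field_simp
      rw [this, norm_mul, norm_inv, hχu]; norm_num
    have := hδ _ hpow (by rw [hnorm]; exact hd1)
    field_simp at this
    linear_combination this
  -- corrected trivializer
  refine ⟨fun g => β g * (χ g)⁻¹, ?_, ?_⟩
  · constructor
    · intro g; rw [norm_mul, norm_inv, h1.1, hχu]; norm_num
    · intro g k
      have e1 := h1.2 g k
      have hg := nz_of_norm_one (hχu g)
      have hk := nz_of_norm_one (hχu k)
      have hgk := nz_of_norm_one (hχu (g * k))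
      simp only []
      rw [← hχmul g k, ← e1]
      field_simp
  · intro g
    have ha := nz_of_norm_one (h0.1 g)
    have hg := nz_of_norm_one (hχu g)
    have key : β g * (χ g)⁻¹ - α0 g = (μ g - χ g) * (χ g)⁻¹ * α0 g := by
      simp only [hμdef]; field_simp
    rw [key, norm_mul, norm_mul, norm_inv, hχu, h0.1]
    simpa using lt_of_lt_of_le (hχclose g) (min_le_left _ _)


section Topology

variable {X : Type*} [TopologicalSpace X]

/-- continuous local sections of trivializers through a given trivializer -/
lemma local_section {δ : ℝ} (hδpos : 0 < δ)
    (hδ : ∀ ζ : ℂ, ζ ^ Fintype.card G = 1 → ‖ζ - 1‖ < δ → ζ = 1)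
    {c : X → G → G → ℂ} (hc : ∀ g h, Continuous fun lam => c lam g h)
    (hex : ∀ lam, ∃ β, Triv (c lam) β)
    (lam1 : X) {α1 : G → ℂ} (hα1 : Triv (c lam1) α1) :
    ∃ V : Set X, IsOpen V ∧ lam1 ∈ V ∧ ∃ σ : X → G → ℂ,
      (∀ lam ∈ V, Triv (c lam) (σ lam)) ∧ σ lam1 = α1 ∧
      (∀ g, ContinuousOn (fun lam => σ lam g) V) := by
  classical
  obtain ⟨ε0, hε0pos, hstab0⟩ := stability (G := G) hδpos hδ (r := δ/4) (by linarith)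
  -- basic open neighborhoods where the cocycle moves little
  have hW : ∀ (lam2 : X) (ε : ℝ), 0 < ε → IsOpen {lam : X | ∀ g h, ‖c lam g h - c lam2 g h‖ < ε}
      ∧ lam2 ∈ {lam : X | ∀ g h, ‖c lam g h - c lam2 g h‖ < ε} := by
    intro lam2 ε hε
    constructor
    · have : {lam : X | ∀ g h, ‖c lam g h - c lam2 g h‖ < ε}
          = ⋂ p : G × G, {lam : X | ‖c lam p.1 p.2 - c lam2 p.1 p.2‖ < ε} := by
        ext lam; simp [Set.mem_iInter, Prod.forall]
      rw [this]
      refine isOpen_iInter_of_finite fun p => ?_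
      have : Continuous fun lam => ‖c lam p.1 p.2 - c lam2 p.1 p.2‖ :=
        ((hc p.1 p.2).sub continuous_const).norm
      exact isOpen_lt this continuous_const
    · simp [hε]
  set V : Set X := {lam : X | ∀ g h, ‖c lam g h - c lam1 g h‖ < ε0} with hV
  obtain ⟨hVopen, hVmem⟩ := hW lam1 ε0 hε0pos
  -- the section: unique trivializer near α1
  set σ : X → G → ℂ := fun lam =>
    if h : ∃ β, Triv (c lam) β ∧ ∀ g, ‖β g - α1 g‖ < δ/4 then h.choose else α1 with hσ
  have hσspec : ∀ lam ∈ V, Triv (c lam) (σ lam) ∧ ∀ g, ‖σ lam g - α1 g‖ < δ/4 := by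
    intro lam hlam
    have hex' : ∃ β, Triv (c lam) β ∧ ∀ g, ‖β g - α1 g‖ < δ/4 := by
      obtain ⟨β, hβ⟩ := hex lam
      obtain ⟨β', hβ', hβ'close⟩ := hstab0 (c lam1) (c lam) α1 β hα1 hβ
        (fun g h => le_of_lt (hlam g h))
      exact ⟨β', hβ', hβ'close⟩
    rw [hσ]
    simp only [dif_pos hex']
    exact hex'.choose_spec
  -- uniqueness of nearby trivializers
  have huniq : ∀ lam ∈ V, ∀ β, Triv (c lam) β → (∀ g, ‖β g - α1 g‖ < δ/2) → β = σ lam := by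
    intro lam hlam β hβ hclose
    obtain ⟨hσT, hσclose⟩ := hσspec lam hlam
    refine Triv.uniq hδ hβ hσT ?_
    intro g
    calc ‖σ lam g - β g‖ ≤ ‖σ lam g - α1 g‖ + ‖α1 g - β g‖ := by
          simpa using norm_sub_le_norm_sub_add_norm_sub (σ lam g) (α1 g) (β g)
      _ < δ/4 + δ/2 := by
          have := hσclose g
          have h2 := hclose g
          rw [norm_sub_rev] at h2
          linarith
      _ ≤ δ := by linarith
  have hσ1 : σ lam1 = α1 := by
    refine (huniq lam1 hVmem α1 hα1 ?_).symm
    intro g; simpa using by linarith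
  refine ⟨V, hVopen, hVmem, σ, fun lam hlam => (hσspec lam hlam).1, hσ1, ?_⟩
  intro g
  intro lam2 hlam2
  have hσT2 := (hσspec lam2 hlam2).1
  rw [ContinuousWithinAt, Metric.tendsto_nhds]
  intro ε' hε'
  set r2 : ℝ := min ε' (δ/4) with hr2
  have hr2pos : 0 < r2 := lt_min hε' (by linarith)
  obtain ⟨ε1, hε1pos, hstab1⟩ := stability (G := G) hδpos hδ hr2pos
  obtain ⟨hV2open, hV2mem⟩ := hW lam2 ε1 hε1pos
  have hV2nhds : {lam : X | ∀ g h, ‖c lam g h - c lam2 g h‖ < ε1} ∈ nhdsWithin lam2 V :=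
    nhdsWithin_le_nhds (hV2open.mem_nhds hV2mem)
  filter_upwards [hV2nhds, self_mem_nhdsWithin] with lam hlamV2 hlamV
  obtain ⟨β', hβ'T, hβ'close⟩ := hstab1 (c lam2) (c lam) (σ lam2) (σ lam)
    hσT2 (hσspec lam hlamV).1 (fun g h => le_of_lt (hlamV2 g h))
  have hβ'eq : β' = σ lam := by
    refine huniq lam hlamV β' hβ'T ?_
    intro g
    calc ‖β' g - α1 g‖ ≤ ‖β' g - σ lam2 g‖ + ‖σ lam2 g - α1 g‖ := by
          simpa using norm_sub_le_norm_sub_add_norm_sub (β' g) (σ lam2 g) (α1 g)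
      _ < δ/4 + δ/4 := by
          have := hβ'close g
          have h2 := (hσspec lam2 hlam2).2 g
          have hle : r2 ≤ δ/4 := min_le_right _ _
          linarith
      _ = δ/2 := by ring
  rw [dist_eq_norm]
  have := hβ'close g
  rw [hβ'eq] at this
  exact lt_of_lt_of_le this (min_le_left _ _)

end Topology

/-- main lifting lemma: a continuous family of pointwise-trivializable cocycles
on `[0,1]` admits a continuous family of trivializers -/
lemma lift {c : Set.Icc (0:ℝ) 1 → G → G → ℂ}
    (hc : ∀ g h, Continuous fun lam => c lam g h)
    (hex : ∀ lam, ∃ β, Triv (c lam) β) :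
    ∃ ω : Set.Icc (0:ℝ) 1 → G → ℂ, (∀ g, Continuous fun lam => ω lam g) ∧
      ∀ lam, Triv (c lam) (ω lam) := by
  classical
  obtain ⟨δ, hδpos, hδ⟩ := exists_sep (Fintype.card G) Fintype.card_pos.ne'
  set A : Set ℝ := {t | t ∈ Set.Icc (0:ℝ) 1 ∧ ∃ ω : Set.Icc (0:ℝ) 1 → G → ℂ,
    (∀ g, Continuous fun lam => ω lam g) ∧
    ∀ lam : Set.Icc (0:ℝ) 1, (lam : ℝ) ≤ t → Triv (c lam) (ω lam)} with hA
  have h0X : (0:ℝ) ∈ Set.Icc (0:ℝ) 1 := by norm_num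
  have h0A : (0:ℝ) ∈ A := by
    refine ⟨h0X, fun _ => (hex ⟨0, h0X⟩).choose, fun g => continuous_const, ?_⟩
    intro lam hlam
    have : lam = ⟨0, h0X⟩ := Subtype.ext (le_antisymm hlam lam.2.1)
    rw [this]
    simpa using (hex ⟨0, h0X⟩).choose_spec
  have hAbdd : BddAbove A := ⟨1, fun t ht => ht.1.2⟩
  have hAne : A.Nonempty := ⟨0, h0A⟩
  set T : ℝ := sSup A with hT
  have hT0 : 0 ≤ T := le_csSup hAbdd h0A
  have hT1 : T ≤ 1 := csSup_le hAne (fun t ht => ht.1.2)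
  have hTX : T ∈ Set.Icc (0:ℝ) 1 := ⟨hT0, hT1⟩
  set lamT : Set.Icc (0:ℝ) 1 := ⟨T, hTX⟩ with hlamT
  obtain ⟨V, hVopen, hVmem, σ, hσT, hσ1, hσcont⟩ :=
    local_section hδpos hδ hc hex lamT (hex lamT).choose_spec
  obtain ⟨ε, hεpos, hball⟩ := Metric.isOpen_iff.mp hVopen lamT hVmem
  -- find t ∈ A close below T
  have htex : ∃ t, t ∈ A ∧ T - ε/2 < t ∧ t ≤ T := by
    by_cases hc0 : T - ε/2 < 0
    · exact ⟨0, h0A, hc0, hT0⟩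
    · obtain ⟨t, htA, htgt⟩ := exists_lt_of_lt_csSup hAne (by linarith : T - ε/2 < T)
      exact ⟨t, htA, htgt, le_csSup hAbdd htA⟩
  obtain ⟨t, htA, htlb, htub⟩ := htex
  obtain ⟨htX, ω, hωcont, hωT⟩ := htA
  set s : ℝ := min 1 (T + ε/2) with hs
  have hts : t ≤ s := le_min htX.2 (by linarith)
  have hsX : s ∈ Set.Icc (0:ℝ) 1 := ⟨le_min (by norm_num) (by linarith), min_le_left _ _⟩
  set tX : Set.Icc (0:ℝ) 1 := ⟨t, htX⟩ with htXdef
  have htXV : tX ∈ V := by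
    apply hball
    rw [Metric.mem_ball, Subtype.dist_eq, Real.dist_eq, abs_lt]
    constructor <;> simp only [htXdef, hlamT] <;> [linarith; linarith]
  -- clamp function
  have hclampmem : ∀ lam : Set.Icc (0:ℝ) 1, max t (min (lam:ℝ) s) ∈ Set.Icc (0:ℝ) 1 := by
    intro lam
    constructor
    · exact le_trans htX.1 (le_max_left _ _)
    · exact max_le htX.2 (le_trans (min_le_right _ _) hsX.2)
  set clamp : Set.Icc (0:ℝ) 1 → Set.Icc (0:ℝ) 1 := fun lam => ⟨max t (min (lam:ℝ) s), hclampmem lam⟩ with hclamp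
  have hclampcont : Continuous clamp := by
    refine Continuous.subtype_mk ?_ _
    exact continuous_const.max ((continuous_subtype_val).min continuous_const)
  have hclampV : ∀ lam : Set.Icc (0:ℝ) 1, clamp lam ∈ V := by
    intro lam
    apply hball
    rw [Metric.mem_ball, Subtype.dist_eq, Real.dist_eq, abs_lt]
    have h1 : t ≤ max t (min (lam:ℝ) s) := le_max_left _ _
    have h2 : max t (min (lam:ℝ) s) ≤ s := max_le hts (min_le_right _ _)
    have h3 : s ≤ T + ε/2 := min_le_right _ _
    constructor <;> simp only [hclamp, hlamT] <;> linarith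
  -- character correction at the junction
  set χ : G → ℂ := fun g => ω tX g * (σ tX g)⁻¹ with hχ
  have hσtX : Triv (c tX) (σ tX) := hσT tX htXV
  have hωtX : Triv (c tX) (ω tX) := hωT tX (le_refl t)
  obtain ⟨hχu, hχm⟩ := Triv.ratio_char hσtX hωtX
  -- glued family
  set ω' : Set.Icc (0:ℝ) 1 → G → ℂ := fun lam g => if (lam:ℝ) ≤ t then ω lam g
    else χ g * σ (clamp lam) g with hω'
  have hω'cont : ∀ g, Continuous fun lam => ω' lam g := by
    intro g
    refine Continuous.if_le (hωcont g) ?_ continuous_subtype_val continuous_const ?_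
    · exact continuous_const.mul ((hσcont g).comp_continuous hclampcont hclampV)
    · intro lam hlam
      have hlamtX : lam = tX := Subtype.ext hlam
      have hclamptX : clamp lam = tX := by
        apply Subtype.ext
        simp only [hclamp, hlam]
        rw [min_eq_left hts, max_self]
      rw [hclamptX, hlamtX, hχ]
      have h0 : σ tX g ≠ 0 := nz_of_norm_one (hσtX.1 g)
      field_simp
  have hω'triv : ∀ lam : Set.Icc (0:ℝ) 1, (lam:ℝ) ≤ s → Triv (c lam) (ω' lam) := by
    intro lam hlam
    by_cases hle : (lam:ℝ) ≤ t
    · have : ω' lam = ω lam := funext fun g => if_pos hle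
      rw [this]
      exact hωT lam hle
    · have hcl : clamp lam = lam := by
        apply Subtype.ext
        simp only [hclamp]
        rw [min_eq_left hlam, max_eq_right (le_of_not_ge hle)]
      have : ω' lam = fun g => σ lam g * χ g := by
        funext g
        rw [hω']
        simp only [if_neg hle, hcl]
        ring
      rw [this]
      exact Triv.mul_char (hσT lam (hcl ▸ hclampV lam)) hχu hχm
  have hsA : s ∈ A := ⟨hsX, ω', hω'cont, hω'triv⟩
  have hsT : s ≤ T := le_csSup hAbdd hsA
  have hTeq : T = 1 := by
    by_contra hne
    have hTlt : T < 1 := lt_of_le_of_ne hT1 hne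
    have : T < s := lt_min hTlt (by linarith)
    linarith
  refine ⟨ω', hω'cont, ?_⟩
  intro lam
  refine hω'triv lam ?_
  rw [hs, hTeq]
  have := lam.2.2
  simp only [min_def]
  split <;> linarith

end Stmt13Aux

open Matrix

theorem stmt13 (G : Type*) [Group G] [Fintype G] (n : ℕ)
    (z : Set.Icc (0 : ℝ) 1 → G → Matrix (Fin n) (Fin n) ℂ)
    (hcont : ∀ g : G, Continuous fun lam => z lam g)
    (hunit : ∀ lam g, z lam g ∈ Matrix.unitaryGroup (Fin n) ℂ)
    (htriv : ∀ lam, ∃ α : G → ℂ, (∀ g, ‖α g‖ = 1) ∧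
      ∀ g h, (α g • z lam g) * (α h • z lam h) = α (g * h) • z lam (g * h)) :
    ∃ ω : Set.Icc (0 : ℝ) 1 → G → ℂ,
      (∀ g : G, Continuous fun lam => ω lam g) ∧
      (∀ lam g, ‖ω lam g‖ = 1) ∧
      ∀ lam (g h : G),
        (ω lam g • z lam g) * (ω lam h • z lam h) = ω lam (g * h) • z lam (g * h) := by
  classical
  rcases Nat.eq_zero_or_pos n with hn | hn
  · subst hn
    haveI : Subsingleton (Matrix (Fin 0) (Fin 0) ℂ) :=
      ⟨fun M N => by ext i j; exact i.elim0⟩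
    exact ⟨fun _ _ => 1, fun g => continuous_const, fun lam g => norm_one,
      fun lam g h => Subsingleton.elim _ _⟩
  · set i0 : Fin n := ⟨0, hn⟩ with hi0
    set c : Set.Icc (0:ℝ) 1 → G → G → ℂ := fun lam g h =>
      ((z lam g * z lam h) * (z lam (g * h))ᴴ) i0 i0 with hcdef
    have hu1 : ∀ lam g, z lam g * (z lam g)ᴴ = 1 := by
      intro lam g
      have := (Matrix.mem_unitaryGroup_iff).mp (hunit lam g)
      rwa [Matrix.star_eq_conjTranspose] at this
    -- forward bridge: a matrix-level trivializing phase is a scalar trivializer of c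
    have hforward : ∀ (lam : Set.Icc (0:ℝ) 1) (α : G → ℂ), (∀ g, ‖α g‖ = 1) →
        (∀ g h, (α g • z lam g) * (α h • z lam h) = α (g * h) • z lam (g * h)) →
        Stmt13Aux.Triv (c lam) α := by
      intro lam α hα heq
      refine ⟨hα, fun g h => ?_⟩
      have e : (α g * α h) • (z lam g * z lam h) = α (g * h) • z lam (g * h) := by
        rw [← heq g h, smul_mul_assoc, mul_smul_comm, smul_smul]
      have h1 := congrArg (fun M => (M * (z lam (g * h))ᴴ) i0 i0) e
      simp only [Matrix.smul_mul, Matrix.smul_apply, smul_eq_mul] at h1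
      rw [hu1 lam (g * h), Matrix.one_apply_eq, mul_one] at h1
      rw [hcdef]
      rw [mul_assoc]
      rw [← h1]
      ring
    have hex : ∀ lam, ∃ β, Stmt13Aux.Triv (c lam) β := by
      intro lam
      obtain ⟨α, hα1, hα2⟩ := htriv lam
      exact ⟨α, hforward lam α hα1 hα2⟩
    -- key matrix identity
    have hkey : ∀ (lam : Set.Icc (0:ℝ) 1) (g h : G),
        z lam g * z lam h = c lam g h • z lam (g * h) := by
      intro lam g h
      obtain ⟨α, hα1, hα2⟩ := htriv lam
      have hT := hforward lam α hα1 hα2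
      have e : (α g * α h) • (z lam g * z lam h) = α (g * h) • z lam (g * h) := by
        rw [← hα2 g h, smul_mul_assoc, mul_smul_comm, smul_smul]
      rw [← hT.2 g h, mul_smul (α g * α h) (c lam g h) (z lam (g * h))] at e
      exact smul_right_injective _ (mul_ne_zero (Stmt13Aux.nz_of_norm_one (hα1 g))
        (Stmt13Aux.nz_of_norm_one (hα1 h))) e
    have hc : ∀ g h, Continuous fun lam => c lam g h := by
      intro g h
      rw [hcdef]
      exact (((hcont g).matrix_mul (hcont h)).matrix_mul
        (hcont (g * h)).matrix_conjTranspose).matrix_elem i0 i0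
    obtain ⟨ω, hωcont, hωtriv⟩ := Stmt13Aux.lift hc hex
    refine ⟨ω, hωcont, fun lam g => (hωtriv lam).1 g, ?_⟩
    intro lam g h
    rw [smul_mul_assoc, mul_smul_comm, smul_smul, hkey lam g h, smul_smul,
      (hωtriv lam).2 g h]
end

section
/- Let U(λ) = U_A(λ) ⊗ U_B(λ), λ ∈ [0,1], be a continuous path of unitaries on ℂ^{d_A} ⊗ ℂ^{d_B}, where for each λ the tensor factors U_A(λ), U_B(λ) are unitary (individually defined only up to a U(1) phase). Then the phases can be chosen so that λ ↦ U_A(λ) and λ ↦ U_B(λ) are both continuous paths of unitaries with U(λ) = U_A(λ) ⊗ U_B(λ) for all λ. -/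
open Matrix Kronecker

noncomputable section
namespace Stmt14Aux

/-- entrywise sum of `normSq`. -/
def nsq {n : ℕ} (M : Matrix (Fin n) (Fin n) ℂ) : ℝ := ∑ i, ∑ j, Complex.normSq (M i j)

lemma unitary_sum {n : ℕ} {M : Matrix (Fin n) (Fin n) ℂ} (h : M ∈ unitaryGroup (Fin n) ℂ) :
    ∑ i, ∑ j, star (M i j) * M i j = (n : ℂ) := by
  have h1 := mem_unitaryGroup_iff'.mp h
  calc ∑ i, ∑ j, star (M i j) * M i j = ∑ j, ∑ i, star (M i j) * M i j := Finset.sum_comm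
    _ = ∑ j : Fin n, (star M * M) j j := by
        refine Finset.sum_congr rfl fun j _ => ?_
        rw [Matrix.mul_apply]
        exact Finset.sum_congr rfl fun i _ => by rw [Matrix.star_apply]
    _ = ∑ j : Fin n, (1 : Matrix (Fin n) (Fin n) ℂ) j j := by rw [h1]
    _ = (n : ℂ) := by simp [Matrix.one_apply]

lemma nsq_unitary {n : ℕ} {M : Matrix (Fin n) (Fin n) ℂ} (h : M ∈ unitaryGroup (Fin n) ℂ) :
    nsq M = (n : ℝ) := by
  have := unitary_sum h
  have h2 : ∑ i, ∑ j, star (M i j) * M i j = ((nsq M : ℝ) : ℂ) := by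
    rw [nsq]
    push_cast
    refine Finset.sum_congr rfl fun i _ => Finset.sum_congr rfl fun j _ => ?_
    rw [Complex.normSq_eq_conj_mul_self]; rfl
  rw [h2] at this
  exact_mod_cast this

lemma unitary_exists_ne {n : ℕ} (hn : 0 < n) {M : Matrix (Fin n) (Fin n) ℂ}
    (h : M ∈ unitaryGroup (Fin n) ℂ) : ∃ i j, M i j ≠ 0 := by
  by_contra hc
  push_neg at hc
  have h1 := mem_unitaryGroup_iff.mp h
  have h2 := congrFun (congrFun h1 ⟨0, hn⟩) ⟨0, hn⟩
  rw [Matrix.mul_apply] at h2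
  simp [hc, Matrix.one_apply] at h2

lemma smul_unitary {n : ℕ} {c : ℂ} (hc : star c * c = 1) {M : Matrix (Fin n) (Fin n) ℂ}
    (h : M ∈ unitaryGroup (Fin n) ℂ) : c • M ∈ unitaryGroup (Fin n) ℂ := by
  rw [mem_unitaryGroup_iff'] at h ⊢
  rw [star_smul, Matrix.smul_mul, Matrix.mul_smul, smul_smul, h, hc, one_smul]

lemma nsq_ne_zero {n : ℕ} {M : Matrix (Fin n) (Fin n) ℂ} {i j : Fin n} (h : M i j ≠ 0) :
    nsq M ≠ 0 := by
  have h1 : 0 < Complex.normSq (M i j) := by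
    simpa [Complex.normSq_pos] using h
  have h2 : Complex.normSq (M i j) ≤ ∑ j', Complex.normSq (M i j') :=
    Finset.single_le_sum (fun j' _ => Complex.normSq_nonneg _) (Finset.mem_univ j)
  have h3 : (∑ j', Complex.normSq (M i j')) ≤ nsq M :=
    Finset.single_le_sum (f := fun i' => ∑ j', Complex.normSq (M i' j'))
      (fun i' _ => Finset.sum_nonneg fun j' _ => Complex.normSq_nonneg _) (Finset.mem_univ i)
  have : 0 < nsq M := lt_of_lt_of_le h1 (le_trans h2 h3)
  exact this.ne'

variable {dA dB : ℕ}

def Aloc' (U : Matrix (Fin dA × Fin dB) (Fin dA × Fin dB) ℂ) (k₀ l₀ : Fin dB) :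
    Matrix (Fin dA) (Fin dA) ℂ := of fun i j => U (i, k₀) (j, l₀)

def Aloc (dA dB : ℕ) (U : Matrix (Fin dA × Fin dB) (Fin dA × Fin dB) ℂ) (k₀ l₀ : Fin dB) :
    Matrix (Fin dA) (Fin dA) ℂ :=
  ((Real.sqrt (dA / nsq (Aloc' U k₀ l₀)) : ℝ) : ℂ) • Aloc' U k₀ l₀

def Bloc (dA dB : ℕ) (U : Matrix (Fin dA × Fin dB) (Fin dA × Fin dB) ℂ) (k₀ l₀ : Fin dB) :
    Matrix (Fin dB) (Fin dB) ℂ :=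
  of fun k l => (∑ i, ∑ j, star (Aloc dA dB U k₀ l₀ i j) * U (i, k) (j, l)) / (dA : ℂ)

lemma core (hA : 0 < dA) {U : Matrix (Fin dA × Fin dB) (Fin dA × Fin dB) ℂ}
    {UA : Matrix (Fin dA) (Fin dA) ℂ} {UB : Matrix (Fin dB) (Fin dB) ℂ}
    (hUA : UA ∈ unitaryGroup (Fin dA) ℂ) (hUB : UB ∈ unitaryGroup (Fin dB) ℂ)
    (hU : U = UA ⊗ₖ UB) (k₀ l₀ : Fin dB) (hz : UB k₀ l₀ ≠ 0) :
    Aloc dA dB U k₀ l₀ ∈ unitaryGroup (Fin dA) ℂ ∧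
    Bloc dA dB U k₀ l₀ ∈ unitaryGroup (Fin dB) ℂ ∧
    U = Aloc dA dB U k₀ l₀ ⊗ₖ Bloc dA dB U k₀ l₀ := by
  set z := UB k₀ l₀ with hzdef
  have hA'eq : Aloc' U k₀ l₀ = z • UA := by
    ext i j
    simp only [Aloc', of_apply, hU, kroneckerMap_apply, Matrix.smul_apply, smul_eq_mul]
    ring
  have hnsqUA : nsq UA = (dA : ℝ) := nsq_unitary hUA
  have hnsq : nsq (Aloc' U k₀ l₀) = Complex.normSq z * dA := by
    rw [hA'eq, nsq]
    simp only [Matrix.smul_apply, smul_eq_mul, Complex.normSq_mul, ← Finset.mul_sum]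
    rw [show (∑ i, ∑ j, Complex.normSq (UA i j)) = nsq UA from rfl, hnsqUA]
  have hnsqpos : (0:ℝ) < Complex.normSq z * dA := by
    have := Complex.normSq_pos.mpr hz
    positivity
  set r : ℝ := Real.sqrt (dA / nsq (Aloc' U k₀ l₀)) with hrdef
  set c : ℂ := (r : ℂ) * z with hcdef
  have hr2 : r ^ 2 * Complex.normSq z = 1 := by
    rw [hrdef, Real.sq_sqrt (by rw [hnsq]; positivity), hnsq]
    field_simp
    ring
    exact mul_inv_cancel₀ (Complex.normSq_pos.mpr hz).ne'
  have hc : star c * c = 1 := by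
    have : star c * c = ((Complex.normSq c : ℝ) : ℂ) := by
      rw [Complex.normSq_eq_conj_mul_self]; rfl
    rw [this, hcdef]
    have : Complex.normSq ((r:ℂ) * z) = r ^ 2 * Complex.normSq z := by
      rw [Complex.normSq_mul, Complex.normSq_ofReal]; ring
    rw [this, hr2, Complex.ofReal_one]
  have hAeq : Aloc dA dB U k₀ l₀ = c • UA := by
    rw [Aloc, hA'eq, smul_smul, hcdef, hrdef, hA'eq]
  have hAu : Aloc dA dB U k₀ l₀ ∈ unitaryGroup (Fin dA) ℂ := by
    rw [hAeq]; exact smul_unitary hc hUA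
  have hBeq : Bloc dA dB U k₀ l₀ = star c • UB := by
    ext k l
    rw [Bloc, of_apply, Matrix.smul_apply, smul_eq_mul]
    have hterm : ∀ i j, star (Aloc dA dB U k₀ l₀ i j) * U (i, k) (j, l)
        = (star c * UB k l) * (star (UA i j) * UA i j) := by
      intro i j
      rw [hAeq, Matrix.smul_apply, smul_eq_mul, hU, kroneckerMap_apply, star_mul']
      ring
    simp only [hterm, ← Finset.mul_sum]
    rw [unitary_sum hUA]
    have hdA : (dA : ℂ) ≠ 0 := by exact_mod_cast hA.ne'
    field_simp
  have hBu : Bloc dA dB U k₀ l₀ ∈ unitaryGroup (Fin dB) ℂ := by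
    rw [hBeq]
    refine smul_unitary ?_ hUB
    rw [star_star, mul_comm]
    exact hc
  refine ⟨hAu, hBu, ?_⟩
  rw [hAeq, hBeq, smul_kronecker, kronecker_smul, smul_smul, mul_comm, hc, one_smul, hU]

lemma phase {dA dB : ℕ} (hA : 0 < dA) (hB : 0 < dB)
    {UA VA : Matrix (Fin dA) (Fin dA) ℂ} {UB VB : Matrix (Fin dB) (Fin dB) ℂ}
    (hUA : UA ∈ unitaryGroup (Fin dA) ℂ) (hUB : UB ∈ unitaryGroup (Fin dB) ℂ)
    (hVA : VA ∈ unitaryGroup (Fin dA) ℂ)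
    (heq : UA ⊗ₖ UB = VA ⊗ₖ VB) :
    ∃ c : ℂ, star c * c = 1 ∧ VA = c • UA ∧ VB = star c • UB := by
  have hent : ∀ (i j : Fin dA) (k l : Fin dB), UA i j * UB k l = VA i j * VB k l := by
    intro i j k l
    have := congrFun (congrFun heq (i, k)) (j, l)
    simpa [kroneckerMap_apply] using this
  obtain ⟨i, j, hij⟩ := unitary_exists_ne hA hUA
  obtain ⟨k, l, hkl⟩ := unitary_exists_ne hB hUB
  have h0 : VA i j * VB k l ≠ 0 := by rw [← hent]; exact mul_ne_zero hij hkl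
  have hVB : VB k l ≠ 0 := fun h => h0 (by rw [h, mul_zero])
  have hVAeq : VA = (UB k l / VB k l) • UA := by
    ext p q
    rw [Matrix.smul_apply, smul_eq_mul]
    have := hent p q k l
    field_simp
    linear_combination -this
  have hcc : star (UB k l / VB k l) * (UB k l / VB k l) = 1 := by
    have h1 := mem_unitaryGroup_iff.mp hVA
    rw [hVAeq, star_smul, Matrix.smul_mul, Matrix.mul_smul, smul_smul,
      mem_unitaryGroup_iff.mp hUA] at h1
    have h2 := congrFun (congrFun h1 ⟨0, hA⟩) ⟨0, hA⟩
    simp only [Matrix.smul_apply, Matrix.one_apply_eq, smul_eq_mul, mul_one] at h2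
    rw [mul_comm] at h2
    exact h2
  refine ⟨UB k l / VB k l, hcc, hVAeq, ?_⟩
  ext r s
  rw [Matrix.smul_apply, smul_eq_mul]
  have h3 := hent i j r s
  rw [hVAeq, Matrix.smul_apply, smul_eq_mul] at h3
  have h4 : UB r s = (UB k l / VB k l) * VB r s := by
    refine mul_left_cancel₀ hij ?_
    linear_combination h3
  rw [h4, ← mul_assoc, hcc, one_mul]

lemma pasting {X Y : Type*} [TopologicalSpace X] [TopologicalSpace Y] {f : X → Y} {s t : Set X}
    (hs : IsClosed s) (ht : IsClosed t) (hfs : ContinuousOn f s) (hft : ContinuousOn f t) :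
    ContinuousOn f (s ∪ t) := by
  intro x hx
  rw [continuousWithinAt_union]
  constructor
  · by_cases h : x ∈ s
    · exact hfs x h
    · exact continuousWithinAt_of_notMem_closure (by rwa [hs.closure_eq])
  · by_cases h : x ∈ t
    · exact hft x h
    · exact continuousWithinAt_of_notMem_closure (by rwa [ht.closure_eq])

lemma continuousOn_matrix {X : Type*} [TopologicalSpace X] {m n : Type*}
    {f : X → Matrix m n ℂ} {s : Set X}
    (h : ∀ i j, ContinuousOn (fun x => f x i j) s) : ContinuousOn f s := by
  rw [continuousOn_iff_continuous_restrict]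
  exact continuous_matrix fun i j => continuousOn_iff_continuous_restrict.mp (h i j)

lemma contAB {dA dB : ℕ} {U : Set.Icc (0:ℝ) 1 → Matrix (Fin dA × Fin dB) (Fin dA × Fin dB) ℂ}
    (hcont : Continuous U) (k₀ l₀ : Fin dB) {s : Set (Set.Icc (0:ℝ) 1)}
    (hs : ∀ x ∈ s, nsq (Aloc' (U x) k₀ l₀) ≠ 0) :
    ContinuousOn (fun x => Aloc dA dB (U x) k₀ l₀) s ∧
    ContinuousOn (fun x => Bloc dA dB (U x) k₀ l₀) s := by
  have hentry : ∀ p q, Continuous fun x => U x p q := fun p q =>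
    (continuous_apply q).comp ((continuous_apply p).comp hcont)
  have hA'cont : Continuous fun x => Aloc' (U x) k₀ l₀ :=
    continuous_matrix fun i j => hentry (i, k₀) (j, l₀)
  have hnsqcont : Continuous fun x => nsq (Aloc' (U x) k₀ l₀) := by
    refine continuous_finset_sum _ fun i _ => continuous_finset_sum _ fun j _ => ?_
    exact Complex.continuous_normSq.comp (hentry (i, k₀) (j, l₀))
  have hcoef : ContinuousOn
      (fun x => ((Real.sqrt (dA / nsq (Aloc' (U x) k₀ l₀)) : ℝ) : ℂ)) s := by
    refine Complex.continuous_ofReal.comp_continuousOn ?_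
    refine Real.continuous_sqrt.comp_continuousOn ?_
    exact ContinuousOn.div continuousOn_const hnsqcont.continuousOn hs
  have hAon : ContinuousOn (fun x => Aloc dA dB (U x) k₀ l₀) s :=
    hcoef.smul hA'cont.continuousOn
  refine ⟨hAon, ?_⟩
  refine continuousOn_matrix fun k l => ?_
  rw [continuousOn_iff_continuous_restrict]
  have hAr : Continuous fun x : s => Aloc dA dB (U x.1) k₀ l₀ :=
    continuousOn_iff_continuous_restrict.mp hAon
  have : Continuous fun x : s =>
      (∑ i, ∑ j, star (Aloc dA dB (U x.1) k₀ l₀ i j) * U x.1 (i, k) (j, l)) / (dA : ℂ) := by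
    refine Continuous.div_const ?_ _
    refine continuous_finset_sum _ fun i _ => continuous_finset_sum _ fun j _ => ?_
    refine Continuous.mul ?_ ((hentry (i, k) (j, l)).comp continuous_subtype_val)
    exact continuous_star.comp ((continuous_apply j).comp ((continuous_apply i).comp hAr))
  exact this

end Stmt14Aux


open Stmt14Aux in

theorem stmt14 (dA dB : ℕ) (hA : 0 < dA) (hB : 0 < dB)
    (U : Set.Icc (0 : ℝ) 1 → Matrix (Fin dA × Fin dB) (Fin dA × Fin dB) ℂ)
    (hcont : Continuous U)
    (hunit : ∀ lam, U lam ∈ Matrix.unitaryGroup (Fin dA × Fin dB) ℂ)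
    (hfac : ∀ lam, ∃ (UA : Matrix (Fin dA) (Fin dA) ℂ) (UB : Matrix (Fin dB) (Fin dB) ℂ),
      UA ∈ Matrix.unitaryGroup (Fin dA) ℂ ∧ UB ∈ Matrix.unitaryGroup (Fin dB) ℂ ∧
      U lam = UA ⊗ₖ UB) :
    ∃ (A : Set.Icc (0 : ℝ) 1 → Matrix (Fin dA) (Fin dA) ℂ)
      (B : Set.Icc (0 : ℝ) 1 → Matrix (Fin dB) (Fin dB) ℂ),
      Continuous A ∧ Continuous B ∧
      (∀ lam, A lam ∈ Matrix.unitaryGroup (Fin dA) ℂ) ∧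
      (∀ lam, B lam ∈ Matrix.unitaryGroup (Fin dB) ℂ) ∧
      ∀ lam, U lam = A lam ⊗ₖ B lam := by
  classical
  have hentry : ∀ p q, Continuous fun x => U x p q := fun p q =>
    (continuous_apply q).comp ((continuous_apply p).comp hcont)
  -- an open cover by sets where some fixed entry of U is nonzero
  have hcover : ∀ x : Set.Icc (0:ℝ) 1,
      ∃ pq : ((Fin dA × Fin dB) × (Fin dA × Fin dB)), U x pq.1 pq.2 ≠ 0 := by
    intro x
    by_contra hc
    push_neg at hc
    have h1 := Matrix.mem_unitaryGroup_iff.mp (hunit x)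
    have h2 := congrFun (congrFun h1 (⟨0,hA⟩,⟨0,hB⟩)) (⟨0,hA⟩,⟨0,hB⟩)
    have hz : ∀ p q, U x p q = 0 := fun p q => hc (p, q)
    rw [Matrix.mul_apply] at h2
    simp [hz, Matrix.one_apply] at h2
  obtain ⟨δ, hδ, hball⟩ := lebesgue_number_lemma_of_metric
    (s := (Set.univ : Set (Set.Icc (0:ℝ) 1)))
    (c := fun pq : ((Fin dA × Fin dB) × (Fin dA × Fin dB)) => {x | U x pq.1 pq.2 ≠ 0})
    isCompact_univ
    (fun pq => (isOpen_compl_singleton (x := (0:ℂ))).preimage (hentry pq.1 pq.2))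
    (fun x _ => Set.mem_iUnion.mpr (hcover x))
  obtain ⟨N, hN⟩ := exists_nat_gt (1/δ)
  have hN0 : (0:ℝ) < N := lt_trans (by positivity) hN
  have hNδ : 1/(N:ℝ) < δ := by
    rw [div_lt_iff₀ hN0]
    rw [div_lt_iff₀ hδ] at hN
    linarith
  -- main induction
  have key : ∀ m : ℕ, ∃ (A : Set.Icc (0:ℝ) 1 → Matrix (Fin dA) (Fin dA) ℂ)
      (B : Set.Icc (0:ℝ) 1 → Matrix (Fin dB) (Fin dB) ℂ),
      ContinuousOn A {x : Set.Icc (0:ℝ) 1 | (x:ℝ) ≤ (m:ℝ)/N} ∧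
      ContinuousOn B {x : Set.Icc (0:ℝ) 1 | (x:ℝ) ≤ (m:ℝ)/N} ∧
      ∀ x : Set.Icc (0:ℝ) 1, (x:ℝ) ≤ (m:ℝ)/N →
        A x ∈ Matrix.unitaryGroup (Fin dA) ℂ ∧ B x ∈ Matrix.unitaryGroup (Fin dB) ℂ ∧
        U x = A x ⊗ₖ B x := by
    intro m
    induction m with
    | zero =>
      obtain ⟨UA0, UB0, h1, h2, h3⟩ := hfac ⟨0, by norm_num⟩
      refine ⟨fun _ => UA0, fun _ => UB0, continuousOn_const, continuousOn_const, ?_⟩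
      intro x hx
      have hx0 : (x:ℝ) = 0 := le_antisymm (by simpa using hx) x.2.1
      have hxe : x = (⟨0, by norm_num⟩ : Set.Icc (0:ℝ) 1) := Subtype.ext hx0
      rw [hxe]
      exact ⟨h1, h2, h3⟩
    | succ m ih =>
      obtain ⟨A0, B0, hA0c, hB0c, h0⟩ := ih
      by_cases hmN : 1 ≤ (m:ℝ)/N
      · -- the interval is already covered
        refine ⟨A0, B0, ?_, ?_, ?_⟩
        · exact hA0c.mono fun x _ => le_trans x.2.2 hmN
        · exact hB0c.mono fun x _ => le_trans x.2.2 hmN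
        · exact fun x _ => h0 x (le_trans x.2.2 hmN)
      · push_neg at hmN
        set c : Set.Icc (0:ℝ) 1 := ⟨(m:ℝ)/N, ⟨by positivity, le_of_lt hmN⟩⟩ with hcdef
        obtain ⟨pq, hpq⟩ := hball c (Set.mem_univ c)
        set k₀ := pq.1.2 with hk₀
        set l₀ := pq.2.2 with hl₀
        set T : Set (Set.Icc (0:ℝ) 1) :=
          {x | (m:ℝ)/N ≤ (x:ℝ) ∧ (x:ℝ) ≤ ((m:ℝ)+1)/N} with hTdef
        have hTne : ∀ x ∈ T, U x pq.1 pq.2 ≠ 0 := by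
          intro x hx
          apply hpq
          rw [Metric.mem_ball, Subtype.dist_eq, Real.dist_eq]
          have h1 : (m:ℝ)/N ≤ (x:ℝ) := hx.1
          have h2 : (x:ℝ) ≤ ((m:ℝ)+1)/N := hx.2
          have h3 : ((m:ℝ)+1)/N = (m:ℝ)/N + 1/N := by ring
          have hc1 : (c:ℝ) = (m:ℝ)/N := rfl
          rw [hc1, abs_lt]
          constructor <;> [linarith [hδ]; linarith [hNδ]]
        have hnsqT : ∀ x ∈ T, nsq (Aloc' (U x) k₀ l₀) ≠ 0 := by
          intro x hx
          exact nsq_ne_zero (i := pq.1.1) (j := pq.2.1) (hTne x hx)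
        have hcoreT : ∀ x ∈ T,
            Aloc dA dB (U x) k₀ l₀ ∈ Matrix.unitaryGroup (Fin dA) ℂ ∧
            Bloc dA dB (U x) k₀ l₀ ∈ Matrix.unitaryGroup (Fin dB) ℂ ∧
            U x = Aloc dA dB (U x) k₀ l₀ ⊗ₖ Bloc dA dB (U x) k₀ l₀ := by
          intro x hx
          obtain ⟨UA, UB, hUA, hUB, hUx⟩ := hfac x
          have hzz : UB k₀ l₀ ≠ 0 := by
            intro h
            apply hTne x hx
            have : U x pq.1 pq.2 = UA pq.1.1 pq.2.1 * UB k₀ l₀ := by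
              rw [hUx]; rfl
            rw [this, h, mul_zero]
          exact core hA hUA hUB hUx k₀ l₀ hzz
        obtain ⟨contA, contB⟩ := contAB hcont k₀ l₀ hnsqT
        have hcT : c ∈ T := by
          refine ⟨le_refl _, ?_⟩
          have : (c:ℝ) = (m:ℝ)/N := rfl
          rw [this]
          have : (0:ℝ) ≤ 1/N := by positivity
          have h3 : ((m:ℝ)+1)/N = (m:ℝ)/N + 1/N := by ring
          linarith
        have hc0 := h0 c (le_refl _)
        have hcoreC := hcoreT c hcT
        obtain ⟨w, hw, hwA, hwB⟩ := phase hA hB hcoreC.1 hcoreC.2.1 hc0.1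
          (by rw [← hcoreC.2.2, ← hc0.2.2])
        set A1 : Set.Icc (0:ℝ) 1 → Matrix (Fin dA) (Fin dA) ℂ :=
          fun x => if (x:ℝ) ≤ (m:ℝ)/N then A0 x else w • Aloc dA dB (U x) k₀ l₀ with hA1def
        set B1 : Set.Icc (0:ℝ) 1 → Matrix (Fin dB) (Fin dB) ℂ :=
          fun x => if (x:ℝ) ≤ (m:ℝ)/N then B0 x else star w • Bloc dA dB (U x) k₀ l₀ with hB1def
        have hsplit : {x : Set.Icc (0:ℝ) 1 | (x:ℝ) ≤ ((m:ℕ)+1:ℕ)/N}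
            = {x : Set.Icc (0:ℝ) 1 | (x:ℝ) ≤ (m:ℝ)/N} ∪ T := by
          ext x
          simp only [Set.mem_setOf_eq, Set.mem_union, hTdef]
          push_cast
          constructor
          · intro hx
            rcases le_or_gt (x:ℝ) ((m:ℝ)/N) with h | h
            · exact Or.inl h
            · exact Or.inr ⟨le_of_lt h, hx⟩
          · intro hx
            rcases hx with h | h
            · refine le_trans h ?_
              gcongr
              linarith
            · exact h.2
        have hSclosed : IsClosed {x : Set.Icc (0:ℝ) 1 | (x:ℝ) ≤ (m:ℝ)/N} :=
          isClosed_le continuous_subtype_val continuous_const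
        have hTclosed : IsClosed T := by
          have : T = {x : Set.Icc (0:ℝ) 1 | (m:ℝ)/N ≤ (x:ℝ)}
              ∩ {x : Set.Icc (0:ℝ) 1 | (x:ℝ) ≤ ((m:ℝ)+1)/N} := rfl
          rw [this]
          exact (isClosed_le continuous_const continuous_subtype_val).inter
            (isClosed_le continuous_subtype_val continuous_const)
        have hA1S : ContinuousOn A1 {x : Set.Icc (0:ℝ) 1 | (x:ℝ) ≤ (m:ℝ)/N} :=
          hA0c.congr fun x hx => if_pos hx
        have hA1T : ContinuousOn A1 T := by
          refine (contA.const_smul w).congr fun x hx => ?_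
          by_cases hle : (x:ℝ) ≤ (m:ℝ)/N
          · have hxc : x = c := Subtype.ext (le_antisymm hle hx.1)
            rw [hA1def]
            simp only
            rw [if_pos hle, hxc, hwA]
            rfl
          · rw [hA1def]
            simp only
            rw [if_neg hle]
            rfl
        have hB1S : ContinuousOn B1 {x : Set.Icc (0:ℝ) 1 | (x:ℝ) ≤ (m:ℝ)/N} :=
          hB0c.congr fun x hx => if_pos hx
        have hB1T : ContinuousOn B1 T := by
          refine (contB.const_smul (star w)).congr fun x hx => ?_
          by_cases hle : (x:ℝ) ≤ (m:ℝ)/N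
          · have hxc : x = c := Subtype.ext (le_antisymm hle hx.1)
            rw [hB1def]
            simp only
            rw [if_pos hle, hxc, hwB]
            rfl
          · rw [hB1def]
            simp only
            rw [if_neg hle]
            rfl
        refine ⟨A1, B1, ?_, ?_, ?_⟩
        · rw [hsplit]; exact pasting hSclosed hTclosed hA1S hA1T
        · rw [hsplit]; exact pasting hSclosed hTclosed hB1S hB1T
        · intro x hx
          by_cases hle : (x:ℝ) ≤ (m:ℝ)/N
          · have := h0 x hle
            simpa [hA1def, hB1def, if_pos hle] using this
          · have hxT : x ∈ T := by
              refine ⟨le_of_not_ge hle, ?_⟩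
              have : ((m:ℕ)+1:ℕ)/(N:ℝ) = ((m:ℝ)+1)/N := by push_cast; ring
              rw [← this]
              exact_mod_cast hx
            obtain ⟨hU1, hU2, hU3⟩ := hcoreT x hxT
            have hwB' : star (star w) * star w = 1 := by rw [star_star, mul_comm]; exact hw
            refine ⟨?_, ?_, ?_⟩
            · simpa [hA1def, if_neg hle] using smul_unitary hw hU1
            · simpa [hB1def, if_neg hle] using smul_unitary hwB' hU2
            · rw [hA1def, hB1def]
              simp only
              rw [if_neg hle, if_neg hle, Matrix.smul_kronecker, Matrix.kronecker_smul,
                smul_smul, mul_comm, hw, one_smul]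
              exact hU3
  obtain ⟨A, B, hAc, hBc, hprop⟩ := key N
  have huniv : ∀ x : Set.Icc (0:ℝ) 1, (x:ℝ) ≤ (N:ℝ)/N := by
    intro x
    rw [div_self hN0.ne']
    exact x.2.2
  refine ⟨A, B, ?_, ?_, fun x => (hprop x (huniv x)).1,
    fun x => (hprop x (huniv x)).2.1, fun x => (hprop x (huniv x)).2.2⟩
  · rw [← continuousOn_univ]
    exact hAc.mono fun x _ => huniv x
  · rw [← continuousOn_univ]
    exact hBc.mono fun x _ => huniv x
end
end

section
/- Let d ≥ 2, ω = e^{2πi/d}, and let V: ℤ_d × ℤ_d → U(n) be a projective representation with V_{(m,n)} V_{(m',n')} = ω^{t m' n} V_{(m+m',n+n')} for a fixed integer t. Suppose Λ ∈ M_n(ℂ) commutes with all V_{(m,n)}. Then every eigenvalue of Λ has multiplicity at least d/gcd(d,t): if Λ v = λ v with V_{(1,0)} v = ω^{n₀} v, then the vectors V_{(0,1)}^n v for n = 0, …, d/gcd(d,t) − 1 are eigenvectors of Λ with eigenvalue λ and pairwise distinct V_{(1,0)}-eigenvalues ω^{n₀ − t n}. -/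
open Matrix

theorem stmt17 (d t n : ℕ) (hd : 2 ≤ d) [NeZero d] (ht : 1 ≤ t)
    (ω : ℂ) (hωdef : ω = Complex.exp (2 * Real.pi * Complex.I / d))
    (V : ZMod d × ZMod d → Matrix (Fin n) (Fin n) ℂ)
    (hVu : ∀ p, V p ∈ Matrix.unitaryGroup (Fin n) ℂ)
    (hV : ∀ p q : ZMod d × ZMod d,
      V p * V q = ω ^ (t * q.1.val * p.2.val) • V (p + q))
    (Λ : Matrix (Fin n) (Fin n) ℂ) (hΛ : ∀ p, Commute Λ (V p))
    (μ : ℂ) (v : Fin n → ℂ) (hv : v ≠ 0)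
    (hev : Λ.mulVec v = μ • v)
    (n₀ : ℕ) (hV10 : (V (1, 0)).mulVec v = ω ^ n₀ • v) :
    (∀ k : ℕ, Λ.mulVec (((V (0, 1)) ^ k).mulVec v)
        = μ • ((V (0, 1)) ^ k).mulVec v) ∧
    (∀ k : ℕ, ((V (0, 1)) ^ k).mulVec v ≠ 0) ∧
    (∀ k : ℕ, (V (1, 0)).mulVec (((V (0, 1)) ^ k).mulVec v)
        = (ω ^ n₀ * (ω ^ (t * k))⁻¹) • ((V (0, 1)) ^ k).mulVec v) ∧
    (∀ k k' : ℕ, k < d / Nat.gcd d t → k' < d / Nat.gcd d t → k ≠ k' →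
      ω ^ n₀ * (ω ^ (t * k))⁻¹ ≠ ω ^ n₀ * (ω ^ (t * k'))⁻¹) ∧
    d / Nat.gcd d t ≤ Module.finrank ℂ (Module.End.eigenspace (Matrix.toLin' Λ) μ) := by
  have hd0 : d ≠ 0 := NeZero.ne d
  have hprim : IsPrimitiveRoot ω d := by
    rw [hωdef]; exact Complex.isPrimitiveRoot_exp d hd0
  have hω0 : ω ≠ 0 := by rw [hωdef]; exact Complex.exp_ne_zero _
  -- Part 1
  have h1 : ∀ k : ℕ, Λ.mulVec (((V (0, 1)) ^ k).mulVec v)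
      = μ • ((V (0, 1)) ^ k).mulVec v := by
    intro k
    have hc : Commute Λ ((V (0, 1)) ^ k) := (hΛ _).pow_right k
    rw [mulVec_mulVec, hc.eq, ← mulVec_mulVec, hev, mulVec_smul]
  -- Part 2
  have h2 : ∀ k : ℕ, ((V (0, 1)) ^ k).mulVec v ≠ 0 := by
    intro k hzero
    have hu : IsUnit ((V (0, 1)) ^ k) := ((Unitary.toUnits ⟨_, hVu (0, 1)⟩).isUnit).pow k
    obtain ⟨u, hu⟩ := hu
    apply hv
    have h0 : (↑u⁻¹ : Matrix (Fin n) (Fin n) ℂ).mulVec (((V (0, 1)) ^ k).mulVec v) = 0 := by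
      rw [hzero, mulVec_zero]
    rwa [mulVec_mulVec, ← hu, u.inv_mul, one_mulVec] at h0
  -- commutation relation
  have hcomm : V (1, 0) * V (0, 1) = (ω ^ t)⁻¹ • (V (0, 1) * V (1, 0)) := by
    haveI : Fact (1 < d) := ⟨by omega⟩
    have h10 := hV (1, 0) (0, 1)
    have h01 := hV (0, 1) (1, 0)
    simp only [ZMod.val_zero, ZMod.val_one] at h10 h01
    rw [h10, h01]
    simp only [mul_zero, zero_mul, mul_one, pow_zero, one_smul]
    have heq : ((0 : ZMod d), (1 : ZMod d)) + (1, 0) = ((1 : ZMod d), (0 : ZMod d)) + (0, 1) := by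
      simp [Prod.ext_iff, add_comm]
    rw [heq, smul_smul, inv_mul_cancel₀ (pow_ne_zero _ hω0), one_smul]
  have hcommk : ∀ k : ℕ, V (1, 0) * (V (0, 1)) ^ k
      = (ω ^ (t * k))⁻¹ • ((V (0, 1)) ^ k * V (1, 0)) := by
    intro k
    induction k with
    | zero => simp
    | succ k ih =>
      rw [pow_succ, ← mul_assoc, ih, smul_mul_assoc, mul_assoc, hcomm,
        mul_smul_comm, smul_smul, ← mul_assoc, ← pow_succ]
      congr 1
      rw [← mul_inv, ← pow_add, Nat.mul_succ]
  -- Part 3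
  have h3 : ∀ k : ℕ, (V (1, 0)).mulVec (((V (0, 1)) ^ k).mulVec v)
      = (ω ^ n₀ * (ω ^ (t * k))⁻¹) • ((V (0, 1)) ^ k).mulVec v := by
    intro k
    rw [mulVec_mulVec, hcommk k, smul_mulVec, ← mulVec_mulVec, hV10,
      mulVec_smul, smul_smul, mul_comm]
  -- Part 4
  have h4 : ∀ k k' : ℕ, k < d / Nat.gcd d t → k' < d / Nat.gcd d t → k ≠ k' →
      ω ^ n₀ * (ω ^ (t * k))⁻¹ ≠ ω ^ n₀ * (ω ^ (t * k'))⁻¹ := by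
    have key : ∀ k k' : ℕ, k' < k → k < d / Nat.gcd d t →
        ω ^ (t * k) ≠ ω ^ (t * k') := by
      intro k k' hlt hk heq
      have hpow : ω ^ (t * k - t * k') = 1 := by
        have ht' : t * k' ≤ t * k := Nat.mul_le_mul_left _ hlt.le
        have := pow_sub₀ ω hω0 ht'
        rw [this, heq, mul_inv_cancel₀ (pow_ne_zero _ hω0)]
      have hdvd : d ∣ t * k - t * k' := (IsPrimitiveRoot.pow_eq_one_iff_dvd hprim _).mp hpow
      rw [show t * k - t * k' = t * (k - k') from (Nat.mul_sub ..).symm] at hdvd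
      set g := Nat.gcd d t with hg
      have hgpos : 0 < g := Nat.gcd_pos_of_pos_left _ (Nat.pos_of_ne_zero hd0)
      have hgd : g ∣ d := Nat.gcd_dvd_left d t
      have hgt : g ∣ t := Nat.gcd_dvd_right d t
      have hdvd2 : d / g ∣ (t / g) * (k - k') := by
        have h1 : g * (d / g) ∣ g * ((t / g) * (k - k')) := by
          rw [Nat.mul_div_cancel' hgd, ← mul_assoc, Nat.mul_div_cancel' hgt]
          exact hdvd
        exact (Nat.mul_dvd_mul_iff_left hgpos).mp h1
      have hcop : Nat.Coprime (d / g) (t / g) :=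
        Nat.coprime_div_gcd_div_gcd hgpos
      have hdvd3 : d / g ∣ k - k' := hcop.dvd_of_dvd_mul_left hdvd2
      have hpos : 0 < k - k' := Nat.sub_pos_of_lt hlt
      have := Nat.le_of_dvd hpos hdvd3
      omega
    intro k k' hk hk' hne heq
    have heq2 : (ω ^ (t * k))⁻¹ = (ω ^ (t * k'))⁻¹ :=
      mul_left_cancel₀ (pow_ne_zero _ hω0) heq
    have heq3 : ω ^ (t * k) = ω ^ (t * k') := inv_injective heq2
    rcases lt_or_gt_of_ne hne with h | h
    · exact key k' k h hk' heq3.symm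
    · exact key k k' h hk heq3
  refine ⟨h1, h2, h3, h4, ?_⟩
  -- Part 5
  set g' := d / Nat.gcd d t with hg'
  set f := Matrix.toLin' (V (1, 0)) with hf
  set x : Fin g' → (Fin n → ℂ) := fun k => ((V (0, 1)) ^ (k : ℕ)).mulVec v with hx
  set μs : Fin g' → ℂ := fun k => ω ^ n₀ * (ω ^ (t * (k : ℕ)))⁻¹ with hμs
  have hμinj : Function.Injective μs := by
    intro a b hab
    by_contra hne
    exact h4 a b a.isLt b.isLt (fun h => hne (Fin.val_injective h)) hab
  have heig : ∀ k, Module.End.HasEigenvector f (μs k) (x k) := by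
    intro k
    refine ⟨?_, h2 _⟩
    rw [Module.End.mem_eigenspace_iff, hf, Matrix.toLin'_apply]
    exact h3 _
  have hli : LinearIndependent ℂ x :=
    Module.End.eigenvectors_linearIndependent' f μs hμinj x heig
  set E := Module.End.eigenspace (Matrix.toLin' Λ) μ with hE
  have hmem : ∀ k, x k ∈ E := by
    intro k
    rw [hE, Module.End.mem_eigenspace_iff, Matrix.toLin'_apply]
    exact h1 _
  set y : Fin g' → E := fun k => ⟨x k, hmem k⟩ with hy
  have hliy : LinearIndependent ℂ y := by
    apply LinearIndependent.of_comp E.subtype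
    exact hli
  have := hliy.fintype_card_le_finrank
  simpa using this
end

section
/- Let d ≥ 1, t ≥ 1, q = gcd(d,t), d̃ = d/q. Let X be the d×d shift matrix and P = q⁻¹ Σ_{j∈ℤ_q} X^{j d̃}. Then P is a projector (P² = P = P†) of rank d̃, and, setting X_P = P X P and Z_P = P Z^q P with Z the clock matrix, one has X_P^{d̃} = Z_P^{d̃} = P and X_P Z_P = e^{2πi/d̃} Z_P X_P on the range of P. -/
open Matrix
open Fin.CommRing

/-- rank of a complex idempotent matrix equals its trace -/
theorem aux18_rank_eq_trace (d : ℕ) (M : Matrix (Fin d) (Fin d) ℂ) (h : M * M = M) :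
    (M.rank : ℂ) = M.trace := by
  have hproj : LinearMap.IsProj (LinearMap.range M.mulVecLin) M.mulVecLin := by
    constructor
    · intro x; exact LinearMap.mem_range_self _ x
    · rintro x ⟨y, rfl⟩
      have h2 : (M * M).mulVecLin = M.mulVecLin := by rw [h]
      rw [Matrix.mulVecLin_mul] at h2
      exact congrFun (congrArg DFunLike.coe h2) y
  have htr := hproj.trace
  rw [LinearMap.trace_eq_matrix_trace ℂ (Pi.basisFun ℂ (Fin d)),
    LinearMap.toMatrix_eq_toMatrix'] at htr
  rw [Matrix.rank, ← htr]
  congr 1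
  conv_rhs => rw [← LinearMap.toMatrix'_toLin' M]
  rfl

section helpers

variable {d : ℕ} [NeZero d]

private noncomputable def E18 (d : ℕ) : ℕ → ℂ := fun n => Complex.exp (2 * Real.pi * Complex.I * n / d)

private lemma E18_add (a b : ℕ) : E18 d (a + b) = E18 d a * E18 d b := by
  simp only [E18]
  rw [← Complex.exp_add]
  congr 1
  have : (d : ℂ) ≠ 0 := Nat.cast_ne_zero.mpr (NeZero.ne d)
  push_cast
  field_simp

private lemma E18_d : E18 d d = 1 := by
  have : (d : ℂ) ≠ 0 := Nat.cast_ne_zero.mpr (NeZero.ne d)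
  rw [E18, mul_div_assoc, div_self this, mul_one, Complex.exp_two_pi_mul_I]

private lemma E18_pow (a k : ℕ) : E18 d a ^ k = E18 d (a * k) := by
  induction k with
  | zero => simp [E18]
  | succ k ih => rw [pow_succ, ih, ← E18_add, Nat.mul_succ]

private lemma E18_dvd {n : ℕ} (h : d ∣ n) : E18 d n = 1 := by
  obtain ⟨m, rfl⟩ := h
  rw [← E18_pow, E18_d, one_pow]

private lemma E18_congr {a b : ℕ} (h : a % d = b % d) : E18 d a = E18 d b := by
  have ha : E18 d a = E18 d (a % d) := by
    conv_lhs => rw [← Nat.div_add_mod a d, E18_add, E18_dvd ⟨a / d, rfl⟩, one_mul]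
  have hb : E18 d b = E18 d (b % d) := by
    conv_lhs => rw [← Nat.div_add_mod b d, E18_add, E18_dvd ⟨b / d, rfl⟩, one_mul]
  rw [ha, hb, h]

end helpers

theorem stmt18 (d t : ℕ) (hd : 1 ≤ d) [NeZero d] (ht : 1 ≤ t)
    (X Z : Matrix (Fin d) (Fin d) ℂ)
    (hX : ∀ i j : Fin d, X i j = if i + 1 = j then 1 else 0)
    (hZ : ∀ i j : Fin d, Z i j
      = if i = j then Complex.exp (2 * Real.pi * Complex.I * ((j : ℕ) : ℂ) / d) else 0)
    (q d' : ℕ) (hq : q = Nat.gcd d t) (hd' : d' = d / q)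
    (P : Matrix (Fin d) (Fin d) ℂ)
    (hP : P = (q : ℂ)⁻¹ • ∑ j ∈ Finset.range q, X ^ (j * d')) :
    P * P = P ∧ Pᴴ = P ∧ P.rank = d' ∧
    (P * X * P) ^ d' = P ∧ (P * Z ^ q * P) ^ d' = P ∧
    (P * X * P) * (P * Z ^ q * P)
      = Complex.exp (2 * Real.pi * Complex.I / d') • ((P * Z ^ q * P) * (P * X * P)) := by
  -- basic arithmetic
  have hq0 : 0 < q := hq ▸ Nat.gcd_pos_of_pos_left t hd
  have hqd : q ∣ d := hq ▸ Nat.gcd_dvd_left d t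
  have hqd' : q * d' = d := by rw [hd']; exact Nat.mul_div_cancel' hqd
  have hd'0 : 0 < d' := by
    rcases Nat.eq_zero_or_pos d' with h | h
    · rw [h, Nat.mul_zero] at hqd'; omega
    · exact h
  have hqC : (q : ℂ) ≠ 0 := Nat.cast_ne_zero.mpr hq0.ne'
  -- entries of powers of X
  have hXpow : ∀ (k : ℕ) (i j : Fin d), (X ^ k) i j = if i + (k : Fin d) = j then 1 else 0 := by
    intro k
    induction k with
    | zero => intro i j; simp [Matrix.one_apply]
    | succ k ih =>
      intro i j
      rw [pow_succ, Matrix.mul_apply]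
      have : ∀ m : Fin d, (X ^ k) i m * X m j
          = if m = j - 1 then (X ^ k) i (j - 1) else 0 := by
        intro m
        rw [hX]
        by_cases h : m = j - 1
        · subst h; simp [eq_sub_iff_add_eq]
        · have : ¬ (m + 1 = j) := fun hc => h (by rw [← hc]; ring)
          simp [h, this]
      rw [Finset.sum_congr rfl fun m _ => this m, Finset.sum_ite_eq' Finset.univ (j-1)]
      simp only [Finset.mem_univ, if_true, ih]
      have hcast : ((k + 1 : ℕ) : Fin d) = (k : Fin d) + 1 := by push_cast; ring
      rw [hcast]
      congr 1
      simp only [eq_iff_iff]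
      constructor
      · intro h; linear_combination h
      · intro h; linear_combination h
  have hXd : X ^ d = 1 := by
    ext i j
    rw [hXpow, Matrix.one_apply]
    simp [Fin.natCast_self]
  -- X^a = X^b when a ≡ b mod d
  have hXcongr : ∀ a b : ℕ, a % d = b % d → X ^ a = X ^ b := by
    intro a b h
    ext i j
    rw [hXpow, hXpow]
    have : (a : Fin d) = (b : Fin d) := by
      ext
      rw [Fin.val_natCast, Fin.val_natCast, h]
    rw [this]
  -- Z as a diagonal matrix
  have hZdiag : Z = Matrix.diagonal (fun j : Fin d => E18 d j) := by
    ext i j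
    rw [hZ, Matrix.diagonal_apply]
    simp only [E18]
    by_cases h : i = j <;> simp [h]
  have hZpow : ∀ k : ℕ, Z ^ k = Matrix.diagonal (fun j : Fin d => E18 d ((j : ℕ) * k)) := by
    intro k
    rw [hZdiag, Matrix.diagonal_pow]
    have : (fun j : Fin d => E18 d (j : ℕ)) ^ k = fun j : Fin d => E18 d ((j : ℕ) * k) := by
      funext j
      rw [Pi.pow_apply]
      exact E18_pow _ _
    rw [this]
  have hZd : Z ^ d = 1 := by
    rw [hZpow]
    have : (fun j : Fin d => E18 d ((j : ℕ) * d)) = fun _ => 1 := by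
      funext j; exact E18_dvd ⟨j, Nat.mul_comm _ _⟩
    rw [this, Matrix.diagonal_one]
  -- commutation of X^m with Z^q
  have hcomm : ∀ m : ℕ, X ^ m * Z ^ q = E18 d (m * q) • (Z ^ q * X ^ m) := by
    intro m
    rw [hZpow]
    ext i j
    rw [Matrix.smul_apply, Matrix.mul_diagonal, Matrix.diagonal_mul, hXpow]
    by_cases h : i + (m : Fin d) = j
    · simp only [h, if_true, one_mul]
      have hjval : (j : ℕ) % d = ((i : ℕ) + m) % d := by
        rw [← h]
        simp [Fin.val_add, Fin.val_natCast, Nat.add_mod]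
      have : E18 d ((j : ℕ) * q) = E18 d (((i : ℕ) + m) * q) := by
        apply E18_congr
        have := Nat.ModEq.mul_right q (show (j:ℕ) ≡ (i:ℕ) + m [MOD d] from hjval)
        exact this
      rw [this]
      have : ((i : ℕ) + m) * q = m * q + (i : ℕ) * q := by ring
      rw [this, E18_add, smul_eq_mul]
      ring
    · simp [h]
  -- set y = X ^ d'
  set y : Matrix (Fin d) (Fin d) ℂ := X ^ d' with hy
  set S : Matrix (Fin d) (Fin d) ℂ := ∑ j ∈ Finset.range q, X ^ (j * d') with hS
  have hSy : S = ∑ j ∈ Finset.range q, y ^ j := by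
    apply Finset.sum_congr rfl
    intro j _
    rw [hy, ← pow_mul, Nat.mul_comm]
  have hyq : y ^ q = 1 := by rw [hy, ← pow_mul, Nat.mul_comm d' q, hqd', hXd]
  -- y * S = S
  have hyS : y * S = S := by
    rw [hSy, Finset.mul_sum]
    have h1 : ∀ j, y * y ^ j = y ^ (j + 1) := fun j => (pow_succ' y j).symm
    rw [Finset.sum_congr rfl fun j _ => h1 j]
    have h2 : ∑ j ∈ Finset.range (q + 1), y ^ j = (∑ j ∈ Finset.range q, y ^ j) + y ^ q :=
      Finset.sum_range_succ _ _
    have h3 : ∑ j ∈ Finset.range (q + 1), y ^ j = (∑ j ∈ Finset.range q, y ^ (j + 1)) + y ^ 0 :=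
      Finset.sum_range_succ' _ _
    have := h3.symm.trans h2
    rw [hyq, pow_zero] at this
    exact add_right_cancel this
  have hykS : ∀ k : ℕ, y ^ k * S = S := by
    intro k
    induction k with
    | zero => rw [pow_zero, one_mul]
    | succ k ih => rw [pow_succ, mul_assoc, hyS, ih]
  -- P * P = P
  have hPP : P * P = P := by
    rw [hP]
    rw [smul_mul_smul_comm]
    rw [hSy, Finset.sum_mul, ← hSy]
    rw [Finset.sum_congr rfl fun j _ => hykS j, Finset.sum_const, Finset.card_range]
    rw [← Nat.cast_smul_eq_nsmul ℂ q S, smul_smul]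
    congr 1
    field_simp
  -- shifted sum
  have hshift : ∑ j ∈ Finset.range q, y ^ (j + 1) = S := by
    have h : y * S = ∑ j ∈ Finset.range q, y ^ (j + 1) := by
      conv_lhs => rw [hSy]
      rw [Finset.mul_sum]
      exact Finset.sum_congr rfl fun j _ => (pow_succ' y j).symm
    rw [← h, hyS]
  -- conjugate transpose of X
  have hXH : Xᴴ = X ^ (d - 1) := by
    ext i j
    rw [Matrix.conjTranspose_apply, hX, hXpow]
    have hc : ((d - 1 : ℕ) : Fin d) = -1 := by
      rw [Nat.cast_sub hd, Nat.cast_one, Fin.natCast_self, zero_sub]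
    rw [hc]
    by_cases h : j + 1 = i
    · have h2 : i + -1 = j := by linear_combination -h
      simp [h, h2]
    · have h2 : ¬ (i + -1 = j) := fun hc2 => h (by linear_combination -hc2)
      simp [h, h2]
  have hyjH : ∀ j, j ≤ q → (y ^ j)ᴴ = y ^ (q - j) := by
    intro j hj
    have h2 : (y ^ j)ᴴ * y ^ j = 1 := by
      rw [hy, ← pow_mul, Matrix.conjTranspose_pow, hXH, ← pow_mul, ← pow_add]
      have h4 : (d - 1) * (d' * j) + d' * j = d * (d' * j) := by
        cases d with
        | zero => omega
        | succ n => simp [Nat.succ_sub_one, Nat.succ_mul]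
      rw [h4, pow_mul, hXd, one_pow]
    calc (y ^ j)ᴴ = (y ^ j)ᴴ * (y ^ j * y ^ (q - j)) := by
          rw [← pow_add, Nat.add_sub_cancel' hj, hyq, mul_one]
      _ = ((y ^ j)ᴴ * y ^ j) * y ^ (q - j) := by rw [mul_assoc]
      _ = y ^ (q - j) := by rw [h2, one_mul]
  have hSH : Sᴴ = S := by
    conv_lhs => rw [hSy]
    rw [Matrix.conjTranspose_sum]
    rw [Finset.sum_congr rfl (fun j hj => hyjH j (Finset.mem_range.mp hj).le)]
    rw [← Finset.sum_range_reflect (fun j => y ^ (q - j)) q]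
    have h3 : ∀ j ∈ Finset.range q, y ^ (q - (q - 1 - j)) = y ^ (j + 1) := by
      intro j hj
      have := Finset.mem_range.mp hj
      congr 1
      omega
    rw [Finset.sum_congr rfl h3, hshift]
  have hPH : Pᴴ = P := by
    rw [hP, Matrix.conjTranspose_smul, hSH]
    congr 1
    simp
  -- trace and rank
  have htrS : S.trace = (d : ℂ) := by
    rw [hS, Matrix.trace_sum]
    rw [Finset.sum_eq_single 0 ?h0 ?h1]
    · rw [Nat.zero_mul, pow_zero, Matrix.trace_one]
      simp
    case h0 =>
      intro j hj hj0
      have hjq := Finset.mem_range.mp hj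
      have h1 : 0 < j * d' := Nat.mul_pos (Nat.pos_of_ne_zero hj0) hd'0
      have h2 : j * d' < d := by
        calc j * d' ≤ (q - 1) * d' := Nat.mul_le_mul_right _ (by omega)
          _ < q * d' := (Nat.mul_lt_mul_right hd'0).mpr (by omega)
          _ = d := hqd'
      have h3 : ((j * d' : ℕ) : Fin d) ≠ 0 := by
        simp only [Ne, Fin.natCast_eq_zero]
        intro hdvd
        exact absurd (Nat.le_of_dvd h1 hdvd) (by omega)
      rw [Matrix.trace]
      rw [Finset.sum_eq_zero]
      intro i _
      rw [Matrix.diag_apply, hXpow, if_neg]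
      intro hc
      exact h3 (by rwa [add_eq_left] at hc)
    case h1 =>
      intro h
      exact absurd (Finset.mem_range.mpr hq0) h
  have htrP : P.trace = (d' : ℂ) := by
    rw [hP, Matrix.trace_smul, htrS, smul_eq_mul, ← hqd']
    push_cast
    field_simp
  have hrank : P.rank = d' := by
    have h := aux18_rank_eq_trace d P hPP
    rw [htrP] at h
    exact_mod_cast h
  -- idempotent powers
  have hPpow : P ^ d' = P := by
    obtain ⟨k, hk⟩ : ∃ k, d' = k + 1 := ⟨d' - 1, by omega⟩
    rw [hk]
    exact (show IsIdempotentElem P from hPP).pow_succ_eq k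
  -- X commutes with P
  have hcommXS : X * S = S * X := by
    rw [hS, Finset.mul_sum, Finset.sum_mul]
    exact Finset.sum_congr rfl fun j _ => ((Commute.refl X).pow_right (j * d')).eq
  have hcommXP : X * P = P * X := by
    rw [hP, mul_smul_comm, smul_mul_assoc, hcommXS]
  have hyP : y * P = P := by rw [hP, mul_smul_comm, hyS]
  have hPXP : P * X * P = X * P := by
    rw [← hcommXP, mul_assoc, hPP]
  have hXPpow : (P * X * P) ^ d' = P := by
    rw [hPXP]
    have hc : Commute X P := hcommXP
    rw [hc.mul_pow, hPpow, ← hy, hyP]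
  -- Z^q commutes with P
  have hyZ : y * Z ^ q = Z ^ q * y := by
    have h := hcomm d'
    rw [← hy] at h
    rw [h, show d' * q = d by rw [Nat.mul_comm]; exact hqd', E18_d, one_smul]
  have hZqS : Z ^ q * S = S * Z ^ q := by
    rw [hSy, Finset.mul_sum, Finset.sum_mul]
    refine Finset.sum_congr rfl fun j _ => ?_
    exact ((show Commute y (Z ^ q) from hyZ).pow_left j).eq.symm
  have hZqP : Z ^ q * P = P * Z ^ q := by
    rw [hP, mul_smul_comm, smul_mul_assoc, hZqS]
  have hPZP : P * Z ^ q * P = Z ^ q * P := by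
    rw [← hZqP, mul_assoc, hPP]
  have hZPpow : (P * Z ^ q * P) ^ d' = P := by
    rw [hPZP]
    have hc : Commute (Z ^ q) P := hZqP
    rw [hc.mul_pow, ← pow_mul, hqd', hZd, one_mul, hPpow]
  -- final commutation relation
  have hfin : (P * X * P) * (P * Z ^ q * P)
      = Complex.exp (2 * Real.pi * Complex.I / d') • ((P * Z ^ q * P) * (P * X * P)) := by
    rw [hPXP, hPZP]
    have hphase : Complex.exp (2 * Real.pi * Complex.I / (d' : ℂ)) = E18 d q := by
      rw [E18]
      congr 1
      have hdC : (d : ℂ) = (q : ℂ) * (d' : ℂ) := by rw [← hqd']; push_cast; ring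
      have hd'C : (d' : ℂ) ≠ 0 := Nat.cast_ne_zero.mpr hd'0.ne'
      rw [hdC]
      field_simp
    rw [hphase]
    have l0 : P * (Z ^ q * P) = Z ^ q * P := by
      rw [← mul_assoc, ← hZqP, mul_assoc, hPP]
    have l2 : P * (X * P) = X * P := by
      rw [← mul_assoc, ← hcommXP, mul_assoc, hPP]
    have hc1 := hcomm 1
    rw [pow_one, Nat.one_mul] at hc1
    calc X * P * (Z ^ q * P) = X * (Z ^ q * P) := by rw [mul_assoc, l0]
      _ = (X * Z ^ q) * P := by rw [mul_assoc]
      _ = (E18 d q • (Z ^ q * X)) * P := by rw [hc1]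
      _ = E18 d q • (Z ^ q * (X * P)) := by rw [smul_mul_assoc, mul_assoc]
      _ = E18 d q • (Z ^ q * (P * (X * P))) := by rw [l2]
      _ = E18 d q • (Z ^ q * P * (X * P)) := by rw [mul_assoc]
  exact ⟨hPP, hPH, hrank, hXPpow, hZPpow, hfin⟩
end

section
/- Let G be a finite group, H = ℂ^{d_G} with orthonormal basis indexed by G, and suppose ρ_g |h⟩ = |gh⟩ is the regular representation. Let v = Σ_{g_l,g_r} e^{−iθ(g_l⁻¹ g_r, g_r⁻¹)} |g_l g_r⟩⟨g_l g_r| on H ⊗ H, where e^{iθ} is a 2-cocycle. Then (ρ_g ⊗ ρ_g) v = v (y_g ⊗ x_g) where x_g = Σ_k e^{iθ(k⁻¹,g)} |k⟩⟨g⁻¹k| and y_g = x_g^* (entrywise complex conjugate); moreover x_g x_h = e^{iθ(g,h)} x_{gh}. -/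
open Matrix Kronecker

private lemma aux19 {a b c d : ℂ} (ha : a ≠ 0) (hb : b ≠ 0) (hc : c ≠ 0)
    (h : b * c = a * d) : a⁻¹ = b⁻¹ * (c⁻¹ * d) := by
  field_simp
  linear_combination h

theorem stmt19 (G : Type*) [Group G] [Fintype G] [DecidableEq G]
    (θ : G → G → ℝ)
    (hcoc : ∀ g h k : G,
      Complex.exp ((θ g h : ℂ) * Complex.I) * Complex.exp ((θ (g * h) k : ℂ) * Complex.I)
        = Complex.exp ((θ g (h * k) : ℂ) * Complex.I) * Complex.exp ((θ h k : ℂ) * Complex.I))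
    (ρ : G → Matrix G G ℂ)
    (hρ : ∀ g a b, ρ g a b = if a = g * b then 1 else 0)
    (v : Matrix (G × G) (G × G) ℂ)
    (hv : ∀ p q : G × G, v p q
      = if p = q then Complex.exp (-(θ (p.1⁻¹ * p.2) p.2⁻¹ : ℂ) * Complex.I) else 0)
    (x y : G → Matrix G G ℂ)
    (hx : ∀ g a b, x g a b
      = if a = g * b then Complex.exp ((θ a⁻¹ g : ℂ) * Complex.I) else 0)
    (hy : ∀ g, y g = (x g).map (starRingEnd ℂ)) :
    (∀ g, (ρ g ⊗ₖ ρ g) * v = v * (y g ⊗ₖ x g)) ∧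
    (∀ g h, x g * x h = Complex.exp ((θ g h : ℂ) * Complex.I) • x (g * h)) := by
  constructor
  · intro g
    ext ⟨a1, a2⟩ ⟨b1, b2⟩
    rw [mul_apply, mul_apply]
    rw [Finset.sum_eq_single (b1, b2) (by
        intro c _ hc
        simp [hv, hc]) (by simp),
      Finset.sum_eq_single (a1, a2) (by
        intro c _ hc
        simp [hv, Ne.symm hc]) (by simp)]
    simp only [kroneckerMap_apply, hρ, hv, hx, hy, Matrix.map_apply, if_pos rfl]
    by_cases h1 : a1 = g * b1 <;> by_cases h2 : a2 = g * b2 <;>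
      simp [h1, h2, _root_.mul_inv_rev, mul_assoc, inv_mul_cancel_left]
    subst h1 h2
    have h := hcoc (b1⁻¹ * b2) (b2⁻¹ * g⁻¹) g
    simp only [_root_.mul_inv_rev, mul_assoc, inv_mul_cancel_left, mul_inv_cancel_left,
      inv_mul_cancel, mul_one] at h ⊢
    rw [← Complex.exp_conj]
    simp only [_root_.map_mul, Complex.conj_I, Complex.conj_ofReal, mul_neg, neg_mul]
    rw [Complex.exp_neg, Complex.exp_neg, Complex.exp_neg]
    exact aux19 (Complex.exp_ne_zero _) (Complex.exp_ne_zero _) (Complex.exp_ne_zero _) h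
  · intro g h
    ext a b
    rw [mul_apply, Finset.sum_eq_single (h * b) (by
        intro c _ hc
        rw [hx h]
        simp [hc]) (by simp)]
    simp only [Matrix.smul_apply, smul_eq_mul, hx]
    by_cases h1 : a = g * (h * b) <;>
      simp [h1, mul_assoc, _root_.mul_inv_rev, inv_mul_cancel_left]
    subst h1
    have hc := hcoc (g * (h * b))⁻¹ g h
    simp only [_root_.mul_inv_rev, mul_assoc, inv_mul_cancel_left, inv_mul_cancel, mul_one] at hc ⊢
    linear_combination hc
end
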